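/- arXiv:2202.07149 — 6 statements merged into one kernel-verified Lean document; each statement's English description precedes it below -/
import Mathlib

section
/- For every integer n ≥ 14, writing n = 4m + c with integers m ≥ 0 and 2 ≤ c ≤ 5, there exists a C_3^{(3)}-saturated 3-uniform hypergraph on n vertices with exactly 6(m+2−c) + 9(c−2) edges (equivalently, 6m + 3c − 6 edges; this equals 3n/2 when n ≡ 0 (mod 4), 3n/2 + 3/2 when n ≡ 1 (mod 4), 3n/2 − 3 when n ≡ 2 (mod 4), and 3n/2 − 3/2 when n ≡ 3 (mod 4)). -/
open Finset

variable {V : Type*}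

/-- `E` is the edge set of a 3-uniform hypergraph: every edge has 3 vertices. -/
def IsUniform3 [DecidableEq V] (E : Finset (Finset V)) : Prop :=
  ∀ e ∈ E, e.card = 3

/-- `E` contains a copy of the loose cycle `C₃⁽³⁾`: three edges whose pairwise
intersections are three distinct single vertices, with empty triple intersection. -/
def HasC3 [DecidableEq V] (E : Finset (Finset V)) : Prop :=
  ∃ e₁ ∈ E, ∃ e₂ ∈ E, ∃ e₃ ∈ E, ∃ a b c : V,
    e₁ ∩ e₂ = {a} ∧ e₂ ∩ e₃ = {b} ∧ e₁ ∩ e₃ = {c} ∧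
    a ≠ b ∧ b ≠ c ∧ a ≠ c ∧ e₁ ∩ e₂ ∩ e₃ = ∅

/-- `E` is a `C₃⁽³⁾`-saturated 3-uniform hypergraph: it is 3-uniform, `C₃⁽³⁾`-free,
and adding any non-edge triple creates a copy of `C₃⁽³⁾`. -/
def IsSat3 [DecidableEq V] (E : Finset (Finset V)) : Prop :=
  IsUniform3 E ∧ ¬ HasC3 E ∧
    ∀ e : Finset V, e.card = 3 → e ∉ E → HasC3 (insert e E)

/-- The degree of a vertex: the number of edges containing it. -/
def deg [DecidableEq V] (E : Finset (Finset V)) (v : V) : ℕ :=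
  (E.filter fun e => v ∈ e).card

/-- The codegree of a pair of vertices: number of edges containing both. -/
def codeg [DecidableEq V] (E : Finset (Finset V)) (u v : V) : ℕ :=
  (E.filter fun e => u ∈ e ∧ v ∈ e).card

/-- `u` and `v` are distinct and share an edge (`v ∈ N(u)`). -/
def Adj [DecidableEq V] (E : Finset (Finset V)) (u v : V) : Prop :=
  u ≠ v ∧ ∃ e ∈ E, u ∈ e ∧ v ∈ e

/-- `e₁, e₂` form a `u,v`-link: a loose path of two edges from `u` to `v`. -/
def IsLink [DecidableEq V] (E : Finset (Finset V)) (u v : V) (e₁ e₂ : Finset V) : Prop :=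
  e₁ ∈ E ∧ e₂ ∈ E ∧ u ∈ e₁ ∧ v ∈ e₂ ∧ u ∉ e₂ ∧ v ∉ e₁ ∧
    ∃ w, w ∉ ({u, v} : Finset V) ∧ e₁ ∩ e₂ = {w}

/-- `uv` is a good pair: there exists a `u,v`-link. -/
def GoodPair [DecidableEq V] (E : Finset (Finset V)) (u v : V) : Prop :=
  ∃ e₁ e₂, IsLink E u v e₁ e₂

set_option linter.unusedSectionVars false
set_option linter.unnecessarySeqFocus false

namespace SatCon

variable {V : Type*} [DecidableEq V] {I : Type*}

structure Setup (V : Type*) (I : Type*) [DecidableEq V] where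
  x : V
  y : V
  a : I → V
  b : I → V
  L : I → Finset V
  hxy : x ≠ y
  hxB : ∀ i, x ∉ insert (a i) (insert (b i) (L i))
  hyB : ∀ i, y ∉ insert (a i) (insert (b i) (L i))
  hab : ∀ i, a i ≠ b i
  haL : ∀ i, a i ∉ L i
  hbL : ∀ i, b i ∉ L i
  hL2 : ∀ i, 2 ≤ (L i).card
  hL3 : ∀ i, (L i).card ≤ 3
  hdisj : ∀ i j, i ≠ j →
    Disjoint (insert (a i) (insert (b i) (L i))) (insert (a j) (insert (b j) (L j)))
  hex : ∀ u : V, ∃ i : I, u ∉ insert (a i) (insert (b i) (L i))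
  hcover : ∀ v : V, v = x ∨ v = y ∨ ∃ i, v ∈ insert (a i) (insert (b i) (L i))

namespace Setup

variable (S : Setup V I)

def B (i : I) : Finset V := insert (S.a i) (insert (S.b i) (S.L i))

def swap : Setup V I where
  x := S.y
  y := S.x
  a := S.b
  b := S.a
  L := S.L
  hxy := S.hxy.symm
  hxB := fun i => by rw [Finset.insert_comm]; exact S.hyB i
  hyB := fun i => by rw [Finset.insert_comm]; exact S.hxB i
  hab := fun i => (S.hab i).symm
  haL := S.hbL
  hbL := S.haL
  hL2 := S.hL2
  hL3 := S.hL3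
  hdisj := fun i j h => by rw [Finset.insert_comm, Finset.insert_comm (S.b j)]; exact S.hdisj i j h
  hex := fun u => by obtain ⟨i, hi⟩ := S.hex u; exact ⟨i, by rw [Finset.insert_comm]; exact hi⟩
  hcover := fun v => by
    rcases S.hcover v with h | h | ⟨i, h⟩
    · exact Or.inr (Or.inl h)
    · exact Or.inl h
    · exact Or.inr (Or.inr ⟨i, by rw [Finset.insert_comm]; exact h⟩)

@[simp] lemma swap_x : S.swap.x = S.y := rfl
@[simp] lemma swap_y : S.swap.y = S.x := rfl
@[simp] lemma swap_a : S.swap.a = S.b := rfl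
@[simp] lemma swap_b : S.swap.b = S.a := rfl
@[simp] lemma swap_L : S.swap.L = S.L := rfl
@[simp] lemma swap_B : S.swap.B = S.B := by
  funext i; simp only [B, swap]; rw [Finset.insert_comm]

lemma mem_B {v : V} {i : I} : v ∈ S.B i ↔ v = S.a i ∨ v = S.b i ∨ v ∈ S.L i := by
  simp [B]

lemma a_mem_B (i : I) : S.a i ∈ S.B i := by simp [B]
lemma b_mem_B (i : I) : S.b i ∈ S.B i := by simp [B]
lemma L_subset_B (i : I) : S.L i ⊆ S.B i := by
  intro v hv; simp [B, hv]

lemma x_not_mem_B (i : I) : S.x ∉ S.B i := S.hxB i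
lemma y_not_mem_B (i : I) : S.y ∉ S.B i := S.hyB i

lemma ne_x_of_mem_B {v : V} {i : I} (h : v ∈ S.B i) : v ≠ S.x :=
  fun hv => S.x_not_mem_B i (hv ▸ h)
lemma ne_y_of_mem_B {v : V} {i : I} (h : v ∈ S.B i) : v ≠ S.y :=
  fun hv => S.y_not_mem_B i (hv ▸ h)

lemma block_eq {v : V} {i j : I} (hi : v ∈ S.B i) (hj : v ∈ S.B j) : i = j := by
  by_contra h
  exact (Finset.disjoint_left.1 (S.hdisj i j h) hi) hj

lemma not_mem_B_of_mem_B {v : V} {i j : I} (hi : v ∈ S.B i) (hij : i ≠ j) : v ∉ S.B j :=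
  fun h => hij (S.block_eq hi h)

lemma card_B (i : I) : (S.B i).card = (S.L i).card + 2 := by
  have h1 : S.a i ∉ insert (S.b i) (S.L i) := by
    simp only [Finset.mem_insert]
    push_neg
    exact ⟨S.hab i, S.haL i⟩
  rw [B, Finset.card_insert_of_notMem h1, Finset.card_insert_of_notMem (S.hbL i)]

lemma four_le_card_B (i : I) : 4 ≤ (S.B i).card := by
  have := S.hL2 i; rw [S.card_B]; omega

variable [Fintype I] [DecidableEq I]

def E : Finset (Finset V) :=
  Finset.univ.biUnion fun i =>
    ((S.B i \ {S.a i}).image fun v => {S.x, S.a i, v}) ∪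
    ((S.B i \ {S.b i}).image fun v => {S.y, S.b i, v}) ∪
    (if (S.L i).card = 3 then {S.L i} else ∅)

lemma E_swap : S.swap.E = S.E := by
  unfold E
  apply Finset.biUnion_congr rfl
  intro i _
  simp only [swap_B, swap_a, swap_b, swap_L, swap_x, swap_y]
  congr 1
  exact Finset.union_comm _ _

lemma xedge_mem {i : I} {v : V} (hv : v ∈ S.B i) (hva : v ≠ S.a i) :
    ({S.x, S.a i, v} : Finset V) ∈ S.E := by
  simp only [E, Finset.mem_biUnion]
  refine ⟨i, Finset.mem_univ i, ?_⟩
  apply Finset.mem_union_left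
  apply Finset.mem_union_left
  exact Finset.mem_image.2 ⟨v, Finset.mem_sdiff.2 ⟨hv, by simp [hva]⟩, rfl⟩

lemma yedge_mem {i : I} {v : V} (hv : v ∈ S.B i) (hvb : v ≠ S.b i) :
    ({S.y, S.b i, v} : Finset V) ∈ S.E := by
  simp only [E, Finset.mem_biUnion]
  refine ⟨i, Finset.mem_univ i, ?_⟩
  apply Finset.mem_union_left
  apply Finset.mem_union_right
  exact Finset.mem_image.2 ⟨v, Finset.mem_sdiff.2 ⟨hv, by simp [hvb]⟩, rfl⟩

lemma zedge_mem {i : I} (h : (S.L i).card = 3) : S.L i ∈ S.E := by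
  simp only [E, Finset.mem_biUnion]
  refine ⟨i, Finset.mem_univ i, ?_⟩
  apply Finset.mem_union_right
  simp [h]

lemma mem_E_elim {e : Finset V} (he : e ∈ S.E) :
    ∃ i, (∃ v, v ∈ S.B i ∧ v ≠ S.a i ∧ e = {S.x, S.a i, v}) ∨
         (∃ v, v ∈ S.B i ∧ v ≠ S.b i ∧ e = {S.y, S.b i, v}) ∨
         ((S.L i).card = 3 ∧ e = S.L i) := by
  simp only [E, Finset.mem_biUnion, Finset.mem_union, Finset.mem_image, Finset.mem_sdiff,
    Finset.mem_singleton] at he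
  obtain ⟨i, -, h⟩ := he
  refine ⟨i, ?_⟩
  rcases h with (⟨v, ⟨hv1, hv2⟩, hv3⟩ | ⟨v, ⟨hv1, hv2⟩, hv3⟩) | h
  · exact Or.inl ⟨v, hv1, hv2, hv3.symm⟩
  · exact Or.inr (Or.inl ⟨v, hv1, hv2, hv3.symm⟩)
  · by_cases h3 : (S.L i).card = 3
    · simp only [h3, if_true, Finset.mem_singleton] at h
      exact Or.inr (Or.inr ⟨h3, h⟩)
    · simp [h3] at h

lemma shape_x {e : Finset V} (he : e ∈ S.E) (hx : S.x ∈ e) :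
    ∃ i v, v ∈ S.B i ∧ v ≠ S.a i ∧ e = {S.x, S.a i, v} := by
  obtain ⟨i, h | h | h⟩ := S.mem_E_elim he
  · obtain ⟨v, h1, h2, h3⟩ := h; exact ⟨i, v, h1, h2, h3⟩
  · obtain ⟨v, h1, h2, h3⟩ := h
    exfalso
    rw [h3] at hx
    simp only [Finset.mem_insert, Finset.mem_singleton] at hx
    rcases hx with h | h | h
    · exact S.hxy h
    · exact S.x_not_mem_B i (h ▸ S.b_mem_B i)
    · exact S.x_not_mem_B i (h ▸ h1)
  · exfalso
    exact S.x_not_mem_B i (S.L_subset_B i (h.2 ▸ hx))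

lemma shape_y {e : Finset V} (he : e ∈ S.E) (hy : S.y ∈ e) :
    ∃ i v, v ∈ S.B i ∧ v ≠ S.b i ∧ e = {S.y, S.b i, v} := by
  have := S.swap.shape_x (by rw [S.E_swap]; exact he) hy
  simpa using this

lemma shape_z {e : Finset V} (he : e ∈ S.E) (hx : S.x ∉ e) (hy : S.y ∉ e) :
    ∃ i, (S.L i).card = 3 ∧ e = S.L i := by
  obtain ⟨i, h | h | h⟩ := S.mem_E_elim he
  · obtain ⟨v, -, -, h3⟩ := h; exact absurd (h3 ▸ Finset.mem_insert_self _ _) hx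
  · obtain ⟨v, -, -, h3⟩ := h; exact absurd (h3 ▸ Finset.mem_insert_self _ _) hy
  · exact ⟨i, h⟩

lemma not_y_of_x {e : Finset V} (he : e ∈ S.E) (hx : S.x ∈ e) : S.y ∉ e := by
  obtain ⟨i, v, hv, -, rfl⟩ := S.shape_x he hx
  simp only [Finset.mem_insert, Finset.mem_singleton]
  push_neg
  exact ⟨S.hxy.symm, fun h => S.y_not_mem_B i (h ▸ S.a_mem_B i),
    fun h => S.y_not_mem_B i (h ▸ hv)⟩

/-- any edge lives in a single block (outside the hubs). -/
lemma two_blocks {e : Finset V} (he : e ∈ S.E) {p q : V} {i j : I}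
    (hpe : p ∈ e) (hqe : q ∈ e) (hpi : p ∈ S.B i) (hqj : q ∈ S.B j) : i = j := by
  obtain ⟨k, h | h | h⟩ := S.mem_E_elim he
  all_goals
    first
    | (obtain ⟨v, hv, -, rfl⟩ := h
       have hp : p ∈ S.B k := by
         simp only [Finset.mem_insert, Finset.mem_singleton] at hpe
         rcases hpe with rfl | rfl | rfl
         · exact absurd hpi (by first | exact S.x_not_mem_B i | exact S.y_not_mem_B i)
         · first | exact S.a_mem_B k | exact S.b_mem_B k
         · exact hv
       have hq : q ∈ S.B k := by
         simp only [Finset.mem_insert, Finset.mem_singleton] at hqe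
         rcases hqe with rfl | rfl | rfl
         · exact absurd hqj (by first | exact S.x_not_mem_B j | exact S.y_not_mem_B j)
         · first | exact S.a_mem_B k | exact S.b_mem_B k
         · exact hv
       rw [S.block_eq hpi hp, S.block_eq hqj hq])
    | (obtain ⟨-, rfl⟩ := h
       rw [S.block_eq hpi (S.L_subset_B k hpe), S.block_eq hqj (S.L_subset_B k hqe)])

end Setup

variable {V : Type*} [DecidableEq V]

lemma inter_eq_singleton_of {s t : Finset V} {γ : V} (h1 : γ ∈ s) (h2 : γ ∈ t)
    (h : ∀ z, z ∈ s → z ∈ t → z = γ) : s ∩ t = {γ} := by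
  ext z
  simp only [Finset.mem_inter, Finset.mem_singleton]
  constructor
  · rintro ⟨hz1, hz2⟩; exact h z hz1 hz2
  · rintro rfl; exact ⟨h1, h2⟩

lemma eq_triple {e : Finset V} (h3 : e.card = 3) {p q r : V}
    (hp : p ∈ e) (hq : q ∈ e) (hr : r ∈ e)
    (hpq : p ≠ q) (hpr : p ≠ r) (hqr : q ≠ r) : e = {p, q, r} := by
  symm
  apply Finset.eq_of_subset_of_card_le
  · intro z hz
    simp only [Finset.mem_insert, Finset.mem_singleton] at hz
    rcases hz with rfl | rfl | rfl <;> assumption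
  · rw [h3, Finset.card_eq_three.2 ⟨p, q, r, hpq, hpr, hqr, rfl⟩]

lemma hasC3_of (E' : Finset (Finset V)) {f g e : Finset V}
    (hf : f ∈ E') (he : e ∈ E') (hg : g ∈ E') {α β γ : V}
    (h1 : f ∩ e = {α}) (h2 : e ∩ g = {β}) (h3 : f ∩ g = {γ})
    (hαβ : α ≠ β) (hβγ : β ≠ γ) (hαγ : α ≠ γ) : HasC3 E' := by
  refine ⟨f, hf, e, he, g, hg, α, β, γ, h1, h2, h3, hαβ, hβγ, hαγ, ?_⟩
  rw [h1]
  apply Finset.singleton_inter_of_notMem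
  intro hαg
  have hαf : α ∈ f := by
    have : α ∈ f ∩ e := h1 ▸ Finset.mem_singleton_self α
    exact (Finset.mem_inter.1 this).1
  have : α ∈ f ∩ g := Finset.mem_inter.2 ⟨hαf, hαg⟩
  rw [h3, Finset.mem_singleton] at this
  exact hαγ this

end SatCon

namespace SatCon
namespace Setup
variable {V : Type*} [DecidableEq V] {I : Type*} [DecidableEq I] [Fintype I] (S : Setup V I)

lemma xx_core {f1 f2 f3 : Finset V} (h1 : f1 ∈ S.E) (h2 : f2 ∈ S.E) (h3 : f3 ∈ S.E)
    (hx1 : S.x ∈ f1) (hx2 : S.x ∈ f2) {p q r : V}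
    (i12 : f1 ∩ f2 = {p}) (i13 : f1 ∩ f3 = {q}) (i23 : f2 ∩ f3 = {r})
    (hqp : q ≠ p) (hrp : r ≠ p) : False := by
  obtain ⟨i, v, hv, hva, rfl⟩ := S.shape_x h1 hx1
  obtain ⟨j, w, hw, hwa, rfl⟩ := S.shape_x h2 hx2
  have hp : p = S.x := by
    have : S.x ∈ ({S.x, S.a i, v} : Finset V) ∩ {S.x, S.a j, w} :=
      Finset.mem_inter.2 ⟨hx1, hx2⟩
    rw [i12, Finset.mem_singleton] at this
    exact this.symm
  subst hp
  have hq13 : q ∈ ({S.x, S.a i, v} : Finset V) ∩ f3 := i13 ▸ Finset.mem_singleton_self q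
  have hr23 : r ∈ ({S.x, S.a j, w} : Finset V) ∩ f3 := i23 ▸ Finset.mem_singleton_self r
  rw [Finset.mem_inter] at hq13 hr23
  have hqB : q ∈ S.B i := by
    rcases Finset.mem_insert.1 hq13.1 with h | h
    · exact absurd h hqp
    · rcases Finset.mem_insert.1 h with rfl | h
      · exact S.a_mem_B i
      · exact Finset.mem_singleton.1 h ▸ hv
  have hrB : r ∈ S.B j := by
    rcases Finset.mem_insert.1 hr23.1 with h | h
    · exact absurd h hrp
    · rcases Finset.mem_insert.1 h with rfl | h
      · exact S.a_mem_B j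
      · exact Finset.mem_singleton.1 h ▸ hw
  have hij : i = j := S.two_blocks h3 hq13.2 hr23.2 hqB hrB
  subst hij
  have : S.a i ∈ ({S.x, S.a i, v} : Finset V) ∩ {S.x, S.a i, w} := by
    simp
  rw [i12, Finset.mem_singleton] at this
  exact S.x_not_mem_B i (this ▸ S.a_mem_B i)

lemma zz_core {f1 f2 : Finset V} (h1 : f1 ∈ S.E) (h2 : f2 ∈ S.E)
    (hx1 : S.x ∉ f1) (hy1 : S.y ∉ f1) (hx2 : S.x ∉ f2) (hy2 : S.y ∉ f2)
    {p : V} (i12 : f1 ∩ f2 = {p}) : False := by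
  obtain ⟨i, hc1, rfl⟩ := S.shape_z h1 hx1 hy1
  obtain ⟨j, hc2, rfl⟩ := S.shape_z h2 hx2 hy2
  have hp : p ∈ S.L i ∩ S.L j := i12 ▸ Finset.mem_singleton_self p
  rw [Finset.mem_inter] at hp
  have hij : i = j := S.block_eq (S.L_subset_B i hp.1) (S.L_subset_B j hp.2)
  subst hij
  rw [Finset.inter_self] at i12
  have := congrArg Finset.card i12
  rw [hc1, Finset.card_singleton] at this
  omega

lemma xyz_core {f1 f2 f3 : Finset V} (h1 : f1 ∈ S.E) (h2 : f2 ∈ S.E) (h3 : f3 ∈ S.E)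
    (hx1 : S.x ∈ f1) (hy2 : S.y ∈ f2) (hx3 : S.x ∉ f3) (hy3 : S.y ∉ f3) {p q r : V}
    (i12 : f1 ∩ f2 = {p}) (i13 : f1 ∩ f3 = {q}) (i23 : f2 ∩ f3 = {r})
    (hpq : p ≠ q) (hpr : p ≠ r) (hqr : q ≠ r) : False := by
  obtain ⟨i, v, hv, hva, rfl⟩ := S.shape_x h1 hx1
  obtain ⟨j, w, hw, hwb, rfl⟩ := S.shape_y h2 hy2
  obtain ⟨k, hck, rfl⟩ := S.shape_z h3 hx3 hy3
  have hq13 : q ∈ ({S.x, S.a i, v} : Finset V) ∩ S.L k := i13 ▸ Finset.mem_singleton_self q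
  have hr23 : r ∈ ({S.y, S.b j, w} : Finset V) ∩ S.L k := i23 ▸ Finset.mem_singleton_self r
  rw [Finset.mem_inter] at hq13 hr23
  have hqL : q ∈ S.L k := hq13.2
  have hrL : r ∈ S.L k := hr23.2
  -- q = v and i = k
  have hqv : q = v ∧ i = k := by
    rcases Finset.mem_insert.1 hq13.1 with rfl | h
    · exact absurd (S.L_subset_B k hqL) (S.x_not_mem_B k)
    · rcases Finset.mem_insert.1 h with rfl | h
      · have hik : i = k := S.block_eq (S.a_mem_B i) (S.L_subset_B k hqL)
        exact absurd (hik ▸ hqL) (S.haL i)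
      · have hqv := Finset.mem_singleton.1 h
        subst hqv
        exact ⟨rfl, S.block_eq hv (S.L_subset_B k hqL)⟩
  obtain ⟨rfl, rfl⟩ := hqv
  have hrw : r = w ∧ j = i := by
    rcases Finset.mem_insert.1 hr23.1 with rfl | h
    · exact absurd (S.L_subset_B i hrL) (S.y_not_mem_B i)
    · rcases Finset.mem_insert.1 h with rfl | h
      · have hjk : j = i := S.block_eq (S.b_mem_B j) (S.L_subset_B i hrL)
        exact absurd (hjk ▸ hrL) (S.hbL j)
      · have hrw := Finset.mem_singleton.1 h
        subst hrw
        exact ⟨rfl, S.block_eq hw (S.L_subset_B i hrL)⟩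
  obtain ⟨rfl, rfl⟩ := hrw
  -- now p ∈ f1 ∩ f2 leads to contradiction
  have hp12 : p ∈ ({S.x, S.a j, q} : Finset V) ∩ {S.y, S.b j, r} :=
    i12 ▸ Finset.mem_singleton_self p
  rw [Finset.mem_inter] at hp12
  obtain ⟨hpa, hpb⟩ := hp12
  have hqLj : q ∈ S.L j := hqL
  have hrLj : r ∈ S.L j := hrL
  rcases Finset.mem_insert.1 hpa with rfl | h
  · rcases Finset.mem_insert.1 hpb with h' | h'
    · exact S.hxy h'
    · rcases Finset.mem_insert.1 h' with h' | h'
      · exact S.x_not_mem_B j (h' ▸ S.b_mem_B j)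
      · exact S.x_not_mem_B j ((Finset.mem_singleton.1 h') ▸ S.L_subset_B j hrLj)
  · rcases Finset.mem_insert.1 h with rfl | h
    · rcases Finset.mem_insert.1 hpb with h' | h'
      · exact S.y_not_mem_B j (h' ▸ S.a_mem_B j)
      · rcases Finset.mem_insert.1 h' with h' | h'
        · exact S.hab j h'
        · exact S.haL j ((Finset.mem_singleton.1 h') ▸ hrLj)
    · have hpq' := Finset.mem_singleton.1 h
      subst hpq'
      exact hpq rfl

lemma no_C3 : ¬ HasC3 S.E := by
  rintro ⟨e1, h1, e2, h2, e3, h3, a, b, c, i12, i23, i13, hab', hbc, hac, -⟩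
  have E1 : e1 ∈ S.swap.E := by rw [S.E_swap]; exact h1
  have E2 : e2 ∈ S.swap.E := by rw [S.E_swap]; exact h2
  have E3 : e3 ∈ S.swap.E := by rw [S.E_swap]; exact h3
  have c21 : e2 ∩ e1 = {a} := by rw [Finset.inter_comm]; exact i12
  have c32 : e3 ∩ e2 = {b} := by rw [Finset.inter_comm]; exact i23
  have c31 : e3 ∩ e1 = {c} := by rw [Finset.inter_comm]; exact i13
  by_cases hx1 : S.x ∈ e1 <;> by_cases hx2 : S.x ∈ e2 <;> by_cases hx3 : S.x ∈ e3
  · exact S.xx_core h1 h2 h3 hx1 hx2 i12 i13 i23 (Ne.symm hac) (Ne.symm hab')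
  · exact S.xx_core h1 h2 h3 hx1 hx2 i12 i13 i23 (Ne.symm hac) (Ne.symm hab')
  · exact S.xx_core h1 h3 h2 hx1 hx3 i13 i12 c32 hac hbc
  · -- only x ∈ e1
    by_cases hy2 : S.y ∈ e2 <;> by_cases hy3 : S.y ∈ e3
    · exact S.swap.xx_core E2 E3 E1 hy2 hy3 i23 c21 c31 hab' (Ne.symm hbc)
    · exact S.xyz_core h1 h2 h3 hx1 hy2 hx3 hy3 i12 i13 i23 hac hab' (Ne.symm hbc)
    · exact S.xyz_core h1 h3 h2 hx1 hy3 hx2 hy2 i13 i12 c32 (Ne.symm hac) (Ne.symm hbc) hab'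
    · exact S.zz_core h2 h3 hx2 hy2 hx3 hy3 i23
  · exact S.xx_core h2 h3 h1 hx2 hx3 i23 c21 c31 hab' (Ne.symm hbc)
  · -- only x ∈ e2
    by_cases hy1 : S.y ∈ e1 <;> by_cases hy3 : S.y ∈ e3
    · exact S.swap.xx_core E1 E3 E2 hy1 hy3 i13 i12 c32 hac hbc
    · exact S.xyz_core h2 h1 h3 hx2 hy1 hx3 hy3 c21 i23 i13 hab' hac hbc
    · exact S.xyz_core h2 h3 h1 hx2 hy3 hx1 hy1 i23 c21 c31 (Ne.symm hab') hbc hac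
    · exact S.zz_core h1 h3 hx1 hy1 hx3 hy3 i13
  · -- only x ∈ e3
    by_cases hy1 : S.y ∈ e1 <;> by_cases hy2 : S.y ∈ e2
    · exact S.swap.xx_core E1 E2 E3 hy1 hy2 i12 i13 i23 (Ne.symm hac) (Ne.symm hab')
    · exact S.xyz_core h3 h1 h2 hx3 hy1 hx2 hy2 c31 c32 i12 (Ne.symm hbc) (Ne.symm hac) (Ne.symm hab')
    · exact S.xyz_core h3 h2 h1 hx3 hy2 hx1 hy1 c32 c31 c21 hbc (Ne.symm hab') (Ne.symm hac)
    · exact S.zz_core h1 h2 hx1 hy1 hx2 hy2 i12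
  · -- x in none
    by_cases hy1 : S.y ∈ e1 <;> by_cases hy2 : S.y ∈ e2 <;> by_cases hy3 : S.y ∈ e3
    · exact S.swap.xx_core E1 E2 E3 hy1 hy2 i12 i13 i23 (Ne.symm hac) (Ne.symm hab')
    · exact S.swap.xx_core E1 E2 E3 hy1 hy2 i12 i13 i23 (Ne.symm hac) (Ne.symm hab')
    · exact S.swap.xx_core E1 E3 E2 hy1 hy3 i13 i12 c32 hac hbc
    · exact S.zz_core h2 h3 hx2 hy2 hx3 hy3 i23
    · exact S.swap.xx_core E2 E3 E1 hy2 hy3 i23 c21 c31 hab' (Ne.symm hbc)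
    · exact S.zz_core h1 h3 hx1 hy1 hx3 hy3 i13
    · exact S.zz_core h1 h2 hx1 hy1 hx2 hy2 i12
    · exact S.zz_core h1 h2 hx1 hy1 hx2 hy2 i12

end Setup
end SatCon

namespace SatCon
namespace Setup
variable {V : Type*} [DecidableEq V] {I : Type*} [DecidableEq I] [Fintype I] (S : Setup V I)

/-- an edge through `y` covering a given block vertex. -/
lemma yedge_cover {i : I} {u : V} (hu : u ∈ S.B i) :
    ∃ f : Finset V, f ∈ S.E ∧ u ∈ f ∧ S.y ∈ f ∧ f ⊆ insert S.y (S.B i) := by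
  by_cases h : u = S.b i
  · refine ⟨{S.y, S.b i, S.a i}, S.yedge_mem (S.a_mem_B i) (S.hab i), by simp [h], by simp, ?_⟩
    intro z hz
    simp only [Finset.mem_insert, Finset.mem_singleton] at hz ⊢
    rcases hz with rfl | rfl | rfl
    · exact Or.inl rfl
    · exact Or.inr (S.b_mem_B i)
    · exact Or.inr (S.a_mem_B i)
  · refine ⟨{S.y, S.b i, u}, S.yedge_mem hu h, by simp, by simp, ?_⟩
    intro z hz
    simp only [Finset.mem_insert, Finset.mem_singleton] at hz ⊢
    rcases hz with rfl | rfl | rfl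
    · exact Or.inl rfl
    · exact Or.inr (S.b_mem_B i)
    · exact Or.inr hu

/-- an edge through `x` covering a given block vertex and avoiding `z`. -/
lemma xedge_avoid {i : I} {u z : V} (hu : u ∈ S.B i) (hza : z ≠ S.a i)
    (hzx : z ≠ S.x) (hzu : z ≠ u) :
    ∃ f : Finset V, f ∈ S.E ∧ u ∈ f ∧ S.x ∈ f ∧ z ∉ f ∧ f ⊆ insert S.x (S.B i) := by
  by_cases h : u = S.a i
  · have hcard : 0 < ((S.B i) \ {S.a i, z}).card := by
      have h1 : ({S.a i, z} : Finset V).card ≤ 2 := (Finset.card_insert_le _ _).trans (by simp)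
      have h2 := Finset.le_card_sdiff ({S.a i, z} : Finset V) (S.B i)
      have h3 := S.four_le_card_B i
      omega
    obtain ⟨t, ht⟩ := Finset.card_pos.1 hcard
    rw [Finset.mem_sdiff] at ht
    obtain ⟨htB, ht2⟩ := ht
    simp only [Finset.mem_insert, Finset.mem_singleton] at ht2
    push_neg at ht2
    refine ⟨{S.x, S.a i, t}, S.xedge_mem htB ht2.1, by simp [h], by simp, ?_, ?_⟩
    · simp only [Finset.mem_insert, Finset.mem_singleton]
      push_neg
      exact ⟨hzx, hza, fun hh => ht2.2 hh.symm⟩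
    · intro w hw
      simp only [Finset.mem_insert, Finset.mem_singleton] at hw ⊢
      rcases hw with rfl | rfl | rfl
      · exact Or.inl rfl
      · exact Or.inr (S.a_mem_B i)
      · exact Or.inr htB
  · refine ⟨{S.x, S.a i, u}, S.xedge_mem hu h, by simp, by simp, ?_, ?_⟩
    · simp only [Finset.mem_insert, Finset.mem_singleton]
      push_neg
      exact ⟨hzx, hza, hzu⟩
    · intro w hw
      simp only [Finset.mem_insert, Finset.mem_singleton] at hw ⊢
      rcases hw with rfl | rfl | rfl
      · exact Or.inl rfl
      · exact Or.inr (S.a_mem_B i)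
      · exact Or.inr hu

/-- saturation : triple containing both hubs. -/
lemma sat1 {e : Finset V} (hcard : e.card = 3) (hx : S.x ∈ e) (hy : S.y ∈ e) :
    HasC3 (insert e S.E) := by
  have hxy2 : ({S.x, S.y} : Finset V).card ≤ 2 := (Finset.card_insert_le _ _).trans (by simp)
  have hns : ¬ e ⊆ {S.x, S.y} := fun h => by
    have := Finset.card_le_card h; omega
  obtain ⟨u, hue, hu2⟩ := Finset.not_subset.1 hns
  simp only [Finset.mem_insert, Finset.mem_singleton] at hu2
  push_neg at hu2
  obtain ⟨hux, huy⟩ := hu2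
  have he : e = {S.x, S.y, u} := eq_triple hcard hx hy hue S.hxy (Ne.symm hux) (Ne.symm huy)
  subst he
  obtain ⟨j, hj⟩ := S.hex u
  rw [← B] at hj
  have hLpos : 0 < (S.L j).card := by have := S.hL2 j; omega
  obtain ⟨t, ht⟩ := Finset.card_pos.1 hLpos
  have htB : t ∈ S.B j := S.L_subset_B j ht
  have hta : t ≠ S.a j := fun h => S.haL j (h ▸ ht)
  have htb : t ≠ S.b j := fun h => S.hbL j (h ▸ ht)
  have haB := S.a_mem_B j
  have hbB := S.b_mem_B j
  have hax : S.a j ≠ S.x := S.ne_x_of_mem_B haB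
  have hay : S.a j ≠ S.y := S.ne_y_of_mem_B haB
  have hbx : S.b j ≠ S.x := S.ne_x_of_mem_B hbB
  have hby : S.b j ≠ S.y := S.ne_y_of_mem_B hbB
  have htx : t ≠ S.x := S.ne_x_of_mem_B htB
  have hty : t ≠ S.y := S.ne_y_of_mem_B htB
  have hau : S.a j ≠ u := fun h => hj (h ▸ haB)
  have hbu : S.b j ≠ u := fun h => hj (h ▸ hbB)
  have htu : t ≠ u := fun h => hj (h ▸ htB)
  have hxy := S.hxy
  have hab := S.hab j
  apply hasC3_of (insert ({S.x, S.y, u} : Finset V) S.E)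
    (f := {S.x, S.a j, t}) (g := {S.y, S.b j, t})
    (Finset.mem_insert_of_mem (S.xedge_mem htB hta))
    (Finset.mem_insert_self _ _)
    (Finset.mem_insert_of_mem (S.yedge_mem htB htb))
    (α := S.x) (β := S.y) (γ := t)
  · refine inter_eq_singleton_of (by simp) (by simp) ?_
    intro z hz hz'
    simp only [Finset.mem_insert, Finset.mem_singleton] at hz hz'
    rcases hz with rfl | rfl | rfl <;> rcases hz' with h | h | h <;> simp_all
  · refine inter_eq_singleton_of (by simp) (by simp) ?_
    intro z hz hz'
    simp only [Finset.mem_insert, Finset.mem_singleton] at hz hz'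
    rcases hz with rfl | rfl | rfl <;> rcases hz' with h | h | h <;> simp_all
  · refine inter_eq_singleton_of (by simp) (by simp) ?_
    intro z hz hz'
    simp only [Finset.mem_insert, Finset.mem_singleton] at hz hz'
    rcases hz with rfl | rfl | rfl <;> rcases hz' with h | h | h <;> simp_all
  · exact S.hxy
  · exact Ne.symm hty
  · exact Ne.symm htx

end Setup
end SatCon

namespace SatCon
namespace Setup
variable {V : Type*} [DecidableEq V] {I : Type*} [DecidableEq I] [Fintype I] (S : Setup V I)

/-- same block, e = {x, b i, v} with v a leaf. -/
lemma sat2b {e : Finset V} {i : I} {v : V} (hv : v ∈ S.L i)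
    (he : e = {S.x, S.b i, v}) : HasC3 (insert e S.E) := by
  obtain ⟨t, ht, htv⟩ := Finset.exists_mem_ne (s := S.L i) (by have := S.hL2 i; omega) v
  have htB : t ∈ S.B i := S.L_subset_B i ht
  have hvB : v ∈ S.B i := S.L_subset_B i hv
  have hta : t ≠ S.a i := fun h => S.haL i (h ▸ ht)
  have htb : t ≠ S.b i := fun h => S.hbL i (h ▸ ht)
  have hva : v ≠ S.a i := fun h => S.haL i (h ▸ hv)
  have hvb : v ≠ S.b i := fun h => S.hbL i (h ▸ hv)
  have haB := S.a_mem_B i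
  have hbB := S.b_mem_B i
  have hax : S.a i ≠ S.x := S.ne_x_of_mem_B haB
  have hay : S.a i ≠ S.y := S.ne_y_of_mem_B haB
  have hbx : S.b i ≠ S.x := S.ne_x_of_mem_B hbB
  have hby : S.b i ≠ S.y := S.ne_y_of_mem_B hbB
  have htx : t ≠ S.x := S.ne_x_of_mem_B htB
  have hty : t ≠ S.y := S.ne_y_of_mem_B htB
  have hvx : v ≠ S.x := S.ne_x_of_mem_B hvB
  have hvy : v ≠ S.y := S.ne_y_of_mem_B hvB
  have hxy := S.hxy
  have hab := S.hab i
  subst he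
  apply hasC3_of (insert ({S.x, S.b i, v} : Finset V) S.E)
    (f := {S.x, S.a i, t}) (g := {S.y, S.b i, S.a i})
    (Finset.mem_insert_of_mem (S.xedge_mem htB hta))
    (Finset.mem_insert_self _ _)
    (Finset.mem_insert_of_mem (S.yedge_mem haB (S.hab i)))
    (α := S.x) (β := S.b i) (γ := S.a i)
  · refine inter_eq_singleton_of (by simp) (by simp) ?_
    intro z hz hz'
    simp only [Finset.mem_insert, Finset.mem_singleton] at hz hz'
    rcases hz with rfl | rfl | rfl <;> rcases hz' with h | h | h <;> simp_all
  · refine inter_eq_singleton_of (by simp) (by simp) ?_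
    intro z hz hz'
    simp only [Finset.mem_insert, Finset.mem_singleton] at hz hz'
    rcases hz with rfl | rfl | rfl <;> rcases hz' with h | h | h <;> simp_all
  · refine inter_eq_singleton_of (by simp) (by simp) ?_
    intro z hz hz'
    simp only [Finset.mem_insert, Finset.mem_singleton] at hz hz'
    rcases hz with rfl | rfl | rfl <;> rcases hz' with h | h | h <;> simp_all
  · exact Ne.symm hbx
  · exact Ne.symm (S.hab i)
  · exact Ne.symm hax

/-- saturation : triple containing x but not y. -/
lemma sat2x {e : Finset V} (hcard : e.card = 3) (hne : e ∉ S.E)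
    (hx : S.x ∈ e) (hy : S.y ∉ e) : HasC3 (insert e S.E) := by
  have hec : (e.erase S.x).card = 2 := by rw [Finset.card_erase_of_mem hx, hcard]
  obtain ⟨u, v, huv, heq⟩ := Finset.card_eq_two.1 hec
  have hue : u ∈ e := Finset.mem_of_mem_erase (heq ▸ Finset.mem_insert_self u {v})
  have hve : v ∈ e := Finset.mem_of_mem_erase (heq ▸ Finset.mem_insert_of_mem (Finset.mem_singleton_self v))
  have hux : u ≠ S.x := Finset.ne_of_mem_erase (heq ▸ Finset.mem_insert_self u {v})
  have hvx : v ≠ S.x := Finset.ne_of_mem_erase (heq ▸ Finset.mem_insert_of_mem (Finset.mem_singleton_self v))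
  have huy : u ≠ S.y := fun h => hy (h ▸ hue)
  have hvy : v ≠ S.y := fun h => hy (h ▸ hve)
  have he : e = {S.x, u, v} := by
    rw [← heq, Finset.insert_erase hx]
  obtain ⟨i, hiu⟩ : ∃ i, u ∈ S.B i := by
    rcases S.hcover u with h | h | ⟨i, h⟩
    · exact absurd h hux
    · exact absurd h huy
    · exact ⟨i, h⟩
  obtain ⟨j, hjv⟩ : ∃ j, v ∈ S.B j := by
    rcases S.hcover v with h | h | ⟨j, h⟩
    · exact absurd h hvx
    · exact absurd h hvy
    · exact ⟨j, h⟩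
  by_cases hij : i = j
  · -- same block
    subst hij
    have hua : u ≠ S.a i := by
      intro h
      apply hne
      rw [he, h]
      exact S.xedge_mem hjv (fun hh => huv ((h.trans hh.symm)))
    have hva : v ≠ S.a i := by
      intro h
      apply hne
      rw [he, Finset.pair_comm u v, h]
      exact S.xedge_mem hiu (fun hh => huv ((hh.trans h.symm)))
    rcases (S.mem_B.1 hiu) with h | h | h
    · exact absurd h hua
    · -- u = b i, v leaf
      have hvL : v ∈ S.L i := by
        rcases (S.mem_B.1 hjv) with h' | h' | h'
        · exact absurd h' hva
        · exact absurd (h.symm ▸ h' : v = u) (Ne.symm huv)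
        · exact h'
      exact S.sat2b hvL (by rw [he, h])
    · by_cases hvb : v = S.b i
      · exact S.sat2b h (by rw [he, Finset.pair_comm u v, hvb])
      · -- u, v both leaves
        have hvL : v ∈ S.L i := by
          rcases (S.mem_B.1 hjv) with h' | h' | h'
          · exact absurd h' hva
          · exact absurd h' hvb
          · exact h'
        have huL := h
        have haB := S.a_mem_B i
        have hbB := S.b_mem_B i
        have hax : S.a i ≠ S.x := S.ne_x_of_mem_B haB
        have hay : S.a i ≠ S.y := S.ne_y_of_mem_B haB
        have hbx : S.b i ≠ S.x := S.ne_x_of_mem_B hbB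
        have hby : S.b i ≠ S.y := S.ne_y_of_mem_B hbB
        have hau : S.a i ≠ u := fun hh => S.haL i (hh ▸ huL)
        have hav : S.a i ≠ v := fun hh => S.haL i (hh ▸ hvL)
        have hbu : S.b i ≠ u := fun hh => S.hbL i (hh ▸ huL)
        have hbv : S.b i ≠ v := fun hh => S.hbL i (hh ▸ hvL)
        have hxy := S.hxy
        have hab := S.hab i
        subst he
        apply hasC3_of (insert ({S.x, u, v} : Finset V) S.E)
          (f := {S.x, S.a i, S.b i}) (g := {S.y, S.b i, u})
          (Finset.mem_insert_of_mem (S.xedge_mem hbB (Ne.symm (S.hab i))))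
          (Finset.mem_insert_self _ _)
          (Finset.mem_insert_of_mem (S.yedge_mem hiu (Ne.symm hbu)))
          (α := S.x) (β := u) (γ := S.b i)
        · refine inter_eq_singleton_of (by simp) (by simp) ?_
          intro z hz hz'
          simp only [Finset.mem_insert, Finset.mem_singleton] at hz hz'
          rcases hz with rfl | rfl | rfl <;> rcases hz' with h' | h' | h' <;> simp_all
        · refine inter_eq_singleton_of (by simp) (by simp) ?_
          intro z hz hz'
          simp only [Finset.mem_insert, Finset.mem_singleton] at hz hz'
          rcases hz with rfl | rfl | rfl <;> rcases hz' with h' | h' | h' <;> simp_all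
        · refine inter_eq_singleton_of (by simp) (by simp) ?_
          intro z hz hz'
          simp only [Finset.mem_insert, Finset.mem_singleton] at hz hz'
          rcases hz with rfl | rfl | rfl <;> rcases hz' with h' | h' | h' <;> simp_all
        · exact Ne.symm hux
        · exact fun hh => hbu hh.symm
        · exact Ne.symm hbx
  · -- different blocks
    obtain ⟨f, hfE, huf, hyf, hfsub⟩ := S.yedge_cover hiu
    obtain ⟨g, hgE, hvg, hyg, hgsub⟩ := S.yedge_cover hjv
    apply hasC3_of (insert e S.E) (Finset.mem_insert_of_mem hfE)
      (Finset.mem_insert_self _ _) (Finset.mem_insert_of_mem hgE)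
      (α := u) (β := v) (γ := S.y)
    · refine inter_eq_singleton_of huf hue ?_
      intro z hz hz'
      rcases Finset.mem_insert.1 (hfsub hz) with rfl | hzB
      · exact absurd hz' hy
      · rw [he] at hz'
        simp only [Finset.mem_insert, Finset.mem_singleton] at hz'
        rcases hz' with rfl | rfl | rfl
        · exact absurd hzB (S.x_not_mem_B i)
        · rfl
        · exact absurd hzB (S.not_mem_B_of_mem_B hjv (Ne.symm hij))
    · refine inter_eq_singleton_of hve hvg ?_
      intro z hz' hz
      rcases Finset.mem_insert.1 (hgsub hz) with rfl | hzB
      · exact absurd hz' hy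
      · rw [he] at hz'
        simp only [Finset.mem_insert, Finset.mem_singleton] at hz'
        rcases hz' with rfl | rfl | rfl
        · exact absurd hzB (S.x_not_mem_B j)
        · exact absurd hzB (S.not_mem_B_of_mem_B hiu hij)
        · rfl
    · refine inter_eq_singleton_of hyf hyg ?_
      intro z hz hz'
      rcases Finset.mem_insert.1 (hfsub hz) with rfl | hzB
      · rfl
      · rcases Finset.mem_insert.1 (hgsub hz') with rfl | hzB'
        · rfl
        · exact absurd hzB' (S.not_mem_B_of_mem_B hzB hij)
    · exact huv
    · exact hvy
    · exact huy

end Setup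
end SatCon

namespace SatCon
namespace Setup
variable {V : Type*} [DecidableEq V] {I : Type*} [DecidableEq I] [Fintype I] (S : Setup V I)

/-- all three vertices in block i, a i ∈ e, b i ∉ e. -/
lemma sat4same_a {e : Finset V} {i : I} (hcard : e.card = 3)
    (hsub : ∀ w ∈ e, w ∈ S.B i) (ha : S.a i ∈ e) (hb : S.b i ∉ e) :
    HasC3 (insert e S.E) := by
  have hec : (e.erase (S.a i)).card = 2 := by rw [Finset.card_erase_of_mem ha, hcard]
  obtain ⟨p, q, hpq, heq⟩ := Finset.card_eq_two.1 hec
  have hpe : p ∈ e := Finset.mem_of_mem_erase (heq ▸ Finset.mem_insert_self p {q})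
  have hqe : q ∈ e := Finset.mem_of_mem_erase (heq ▸ Finset.mem_insert_of_mem (Finset.mem_singleton_self q))
  have hpa : p ≠ S.a i := Finset.ne_of_mem_erase (heq ▸ Finset.mem_insert_self p {q})
  have hqa : q ≠ S.a i := Finset.ne_of_mem_erase (heq ▸ Finset.mem_insert_of_mem (Finset.mem_singleton_self q))
  have hpb : p ≠ S.b i := fun h => hb (h ▸ hpe)
  have hqb : q ≠ S.b i := fun h => hb (h ▸ hqe)
  have hpL : p ∈ S.L i := by
    rcases S.mem_B.1 (hsub p hpe) with h | h | h
    · exact absurd h hpa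
    · exact absurd h hpb
    · exact h
  have hqL : q ∈ S.L i := by
    rcases S.mem_B.1 (hsub q hqe) with h | h | h
    · exact absurd h hqa
    · exact absurd h hqb
    · exact h
  have he : e = {S.a i, p, q} := by rw [← heq, Finset.insert_erase ha]
  have haB := S.a_mem_B i
  have hbB := S.b_mem_B i
  have hax : S.a i ≠ S.x := S.ne_x_of_mem_B haB
  have hay : S.a i ≠ S.y := S.ne_y_of_mem_B haB
  have hbx : S.b i ≠ S.x := S.ne_x_of_mem_B hbB
  have hby : S.b i ≠ S.y := S.ne_y_of_mem_B hbB
  have hpx : p ≠ S.x := S.ne_x_of_mem_B (S.L_subset_B i hpL)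
  have hpy : p ≠ S.y := S.ne_y_of_mem_B (S.L_subset_B i hpL)
  have hqx : q ≠ S.x := S.ne_x_of_mem_B (S.L_subset_B i hqL)
  have hqy : q ≠ S.y := S.ne_y_of_mem_B (S.L_subset_B i hqL)
  have hxy := S.hxy
  have hab := S.hab i
  subst he
  apply hasC3_of (insert ({S.a i, p, q} : Finset V) S.E)
    (f := {S.x, S.a i, S.b i}) (g := {S.y, S.b i, p})
    (Finset.mem_insert_of_mem (S.xedge_mem hbB (Ne.symm (S.hab i))))
    (Finset.mem_insert_self _ _)
    (Finset.mem_insert_of_mem (S.yedge_mem (S.L_subset_B i hpL) hpb))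
    (α := S.a i) (β := p) (γ := S.b i)
  · refine inter_eq_singleton_of (by simp) (by simp) ?_
    intro z hz hz'
    simp only [Finset.mem_insert, Finset.mem_singleton] at hz hz'
    rcases hz with rfl | rfl | rfl <;> rcases hz' with h' | h' | h' <;> simp_all
  · refine inter_eq_singleton_of (by simp) (by simp) ?_
    intro z hz hz'
    simp only [Finset.mem_insert, Finset.mem_singleton] at hz hz'
    rcases hz with rfl | rfl | rfl <;> rcases hz' with h' | h' | h' <;> simp_all
  · refine inter_eq_singleton_of (by simp) (by simp) ?_
    intro z hz hz'
    simp only [Finset.mem_insert, Finset.mem_singleton] at hz hz'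
    rcases hz with rfl | rfl | rfl <;> rcases hz' with h' | h' | h' <;> simp_all
  · exact fun h => hpa h.symm
  · exact hpb
  · exact hab

/-- all three vertices in one block. -/
lemma sat4same {e : Finset V} {i : I} (hcard : e.card = 3) (hne : e ∉ S.E)
    (hsub : ∀ w ∈ e, w ∈ S.B i) : HasC3 (insert e S.E) := by
  by_cases ha : S.a i ∈ e <;> by_cases hb : S.b i ∈ e
  · -- both a and b in e; third is a leaf
    have h2 : ({S.a i, S.b i} : Finset V).card ≤ 2 := (Finset.card_insert_le _ _).trans (by simp)
    have hns : ¬ e ⊆ {S.a i, S.b i} := fun h => by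
      have := Finset.card_le_card h; omega
    obtain ⟨l, hle, hl2⟩ := Finset.not_subset.1 hns
    simp only [Finset.mem_insert, Finset.mem_singleton] at hl2
    push_neg at hl2
    obtain ⟨hla, hlb⟩ := hl2
    have hlL : l ∈ S.L i := by
      rcases S.mem_B.1 (hsub l hle) with h | h | h
      · exact absurd h hla
      · exact absurd h hlb
      · exact h
    have he : e = {S.a i, S.b i, l} := eq_triple hcard ha hb hle (S.hab i) (Ne.symm hla) (Ne.symm hlb)
    obtain ⟨t, ht, htl⟩ := Finset.exists_mem_ne (s := S.L i) (by have := S.hL2 i; omega) l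
    have htB : t ∈ S.B i := S.L_subset_B i ht
    have hta : t ≠ S.a i := fun h => S.haL i (h ▸ ht)
    have htb : t ≠ S.b i := fun h => S.hbL i (h ▸ ht)
    have haB := S.a_mem_B i
    have hbB := S.b_mem_B i
    have hax : S.a i ≠ S.x := S.ne_x_of_mem_B haB
    have hay : S.a i ≠ S.y := S.ne_y_of_mem_B haB
    have hbx : S.b i ≠ S.x := S.ne_x_of_mem_B hbB
    have hby : S.b i ≠ S.y := S.ne_y_of_mem_B hbB
    have htx : t ≠ S.x := S.ne_x_of_mem_B htB
    have hty : t ≠ S.y := S.ne_y_of_mem_B htB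
    have hlx : l ≠ S.x := S.ne_x_of_mem_B (S.L_subset_B i hlL)
    have hly : l ≠ S.y := S.ne_y_of_mem_B (S.L_subset_B i hlL)
    have hxy := S.hxy
    have hab := S.hab i
    subst he
    apply hasC3_of (insert ({S.a i, S.b i, l} : Finset V) S.E)
      (f := {S.x, S.a i, t}) (g := {S.y, S.b i, t})
      (Finset.mem_insert_of_mem (S.xedge_mem htB hta))
      (Finset.mem_insert_self _ _)
      (Finset.mem_insert_of_mem (S.yedge_mem htB htb))
      (α := S.a i) (β := S.b i) (γ := t)
    · refine inter_eq_singleton_of (by simp) (by simp) ?_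
      intro z hz hz'
      simp only [Finset.mem_insert, Finset.mem_singleton] at hz hz'
      rcases hz with rfl | rfl | rfl <;> rcases hz' with h' | h' | h' <;> simp_all
    · refine inter_eq_singleton_of (by simp) (by simp) ?_
      intro z hz hz'
      simp only [Finset.mem_insert, Finset.mem_singleton] at hz hz'
      rcases hz with rfl | rfl | rfl <;> rcases hz' with h' | h' | h' <;> simp_all
    · refine inter_eq_singleton_of (by simp) (by simp) ?_
      intro z hz hz'
      simp only [Finset.mem_insert, Finset.mem_singleton] at hz hz'
      rcases hz with rfl | rfl | rfl <;> rcases hz' with h' | h' | h' <;> simp_all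
    · exact hab
    · exact Ne.symm htb
    · exact Ne.symm hta
  · exact S.sat4same_a hcard hsub ha hb
  · -- b only : use the swap
    rw [← S.E_swap]
    apply S.swap.sat4same_a (i := i) hcard
    · intro w hw; rw [swap_B]; exact hsub w hw
    · exact hb
    · exact ha
  · -- neither : e = L i, contradiction
    exfalso
    have hsubL : e ⊆ S.L i := by
      intro w hw
      rcases S.mem_B.1 (hsub w hw) with h | h | h
      · exact absurd (h ▸ hw) ha
      · exact absurd (h ▸ hw) hb
      · exact h
    have he : e = S.L i := Finset.eq_of_subset_of_card_le hsubL (by rw [hcard]; exact S.hL3 i)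
    exact hne (he ▸ S.zedge_mem (by rw [← he, hcard]))

/-- two vertices in different blocks, x-route. -/
lemma sat4diff_x {e : Finset V} {i j k : I} {u v z : V}
    (hu : u ∈ S.B i) (hv : v ∈ S.B j) (hz : z ∈ S.B k) (hij : i ≠ j)
    (he : e = {u, v, z}) (huv : u ≠ v) (huz : u ≠ z) (hvz : v ≠ z)
    (hzai : z ≠ S.a i) (hzaj : z ≠ S.a j) : HasC3 (insert e S.E) := by
  have hzx : z ≠ S.x := S.ne_x_of_mem_B hz
  obtain ⟨f, hfE, huf, hxf, hzf, hfsub⟩ := S.xedge_avoid hu hzai hzx (Ne.symm huz)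
  obtain ⟨g, hgE, hvg, hxg, hzg, hgsub⟩ := S.xedge_avoid hv hzaj hzx (Ne.symm hvz)
  have hue : u ∈ e := by rw [he]; simp
  have hve : v ∈ e := by rw [he]; simp
  have hxe : S.x ∉ e := by
    rw [he]
    simp only [Finset.mem_insert, Finset.mem_singleton]
    push_neg
    exact ⟨Ne.symm (S.ne_x_of_mem_B hu), Ne.symm (S.ne_x_of_mem_B hv), Ne.symm hzx⟩
  apply hasC3_of (insert e S.E) (Finset.mem_insert_of_mem hfE)
    (Finset.mem_insert_self _ _) (Finset.mem_insert_of_mem hgE)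
    (α := u) (β := v) (γ := S.x)
  · refine inter_eq_singleton_of huf hue ?_
    intro w hw hw'
    rcases Finset.mem_insert.1 (hfsub hw) with rfl | hwB
    · exact absurd hw' hxe
    · rw [he] at hw'
      simp only [Finset.mem_insert, Finset.mem_singleton] at hw'
      rcases hw' with rfl | rfl | rfl
      · rfl
      · exact absurd hwB (S.not_mem_B_of_mem_B hv (Ne.symm hij))
      · exact absurd hw hzf
  · refine inter_eq_singleton_of hve hvg ?_
    intro w hw' hw
    rcases Finset.mem_insert.1 (hgsub hw) with rfl | hwB
    · exact absurd hw' hxe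
    · rw [he] at hw'
      simp only [Finset.mem_insert, Finset.mem_singleton] at hw'
      rcases hw' with rfl | rfl | rfl
      · exact absurd hwB (S.not_mem_B_of_mem_B hu hij)
      · rfl
      · exact absurd hw hzg
  · refine inter_eq_singleton_of hxf hxg ?_
    intro w hw hw'
    rcases Finset.mem_insert.1 (hfsub hw) with rfl | hwB
    · rfl
    · rcases Finset.mem_insert.1 (hgsub hw') with rfl | hwB'
      · rfl
      · exact absurd hwB' (S.not_mem_B_of_mem_B hwB hij)
  · exact huv
  · exact S.ne_x_of_mem_B hv
  · exact S.ne_x_of_mem_B hu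

/-- two vertices in different blocks. -/
lemma sat4diff {e : Finset V} {i j k : I} {u v z : V}
    (hu : u ∈ S.B i) (hv : v ∈ S.B j) (hz : z ∈ S.B k) (hij : i ≠ j)
    (he : e = {u, v, z}) (huv : u ≠ v) (huz : u ≠ z) (hvz : v ≠ z) :
    HasC3 (insert e S.E) := by
  by_cases hcase : z ≠ S.a i ∧ z ≠ S.a j
  · exact S.sat4diff_x hu hv hz hij he huv huz hvz hcase.1 hcase.2
  · push_neg at hcase
    rw [← S.E_swap]
    apply S.swap.sat4diff_x (i := i) (j := j) (k := k)
      (by rw [swap_B]; exact hu) (by rw [swap_B]; exact hv) (by rw [swap_B]; exact hz)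
      hij he huv huz hvz
    · -- z ≠ b i
      show z ≠ S.b i
      by_cases hzi : z = S.a i
      · exact fun h => S.hab i (hzi ▸ h ▸ rfl)
      · have hzj := hcase hzi
        intro h
        exact S.not_mem_B_of_mem_B (hzj ▸ S.a_mem_B j) (Ne.symm hij) (h ▸ S.b_mem_B i)
    · show z ≠ S.b j
      by_cases hzi : z = S.a i
      · intro h
        exact S.not_mem_B_of_mem_B (hzi ▸ S.a_mem_B i) hij (h ▸ S.b_mem_B j)
      · have hzj := hcase hzi
        exact fun h => S.hab j (hzj ▸ h ▸ rfl)

/-- saturation : triple with no hub. -/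
lemma sat4 {e : Finset V} (hcard : e.card = 3) (hne : e ∉ S.E)
    (hx : S.x ∉ e) (hy : S.y ∉ e) : HasC3 (insert e S.E) := by
  obtain ⟨u, v, w, huv, huw, hvw, rfl⟩ := Finset.card_eq_three.1 hcard
  have hue : u ∈ ({u, v, w} : Finset V) := by simp
  have hve : v ∈ ({u, v, w} : Finset V) := by simp
  have hwe : w ∈ ({u, v, w} : Finset V) := by simp
  obtain ⟨i, hiu⟩ : ∃ i, u ∈ S.B i := by
    rcases S.hcover u with h | h | ⟨i, h⟩
    · exact absurd (h ▸ hue) hx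
    · exact absurd (h ▸ hue) hy
    · exact ⟨i, h⟩
  obtain ⟨j, hjv⟩ : ∃ j, v ∈ S.B j := by
    rcases S.hcover v with h | h | ⟨j, h⟩
    · exact absurd (h ▸ hve) hx
    · exact absurd (h ▸ hve) hy
    · exact ⟨j, h⟩
  obtain ⟨k, hkw⟩ : ∃ k, w ∈ S.B k := by
    rcases S.hcover w with h | h | ⟨k, h⟩
    · exact absurd (h ▸ hwe) hx
    · exact absurd (h ▸ hwe) hy
    · exact ⟨k, h⟩
  by_cases hij : i = j
  · by_cases hik : i = k
    · -- all same block
      apply S.sat4same hcard hne (i := i)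
      intro z hz
      simp only [Finset.mem_insert, Finset.mem_singleton] at hz
      rcases hz with rfl | rfl | rfl
      · exact hiu
      · exact hij ▸ hjv
      · exact hik ▸ hkw
    · -- u,w in different blocks, v in the middle
      exact S.sat4diff hiu hkw hjv hik (by rw [Finset.pair_comm v w]) huw huv (Ne.symm hvw)
  · exact S.sat4diff hiu hjv hkw hij rfl huv huw hvw

end Setup
end SatCon

namespace SatCon
namespace Setup
variable {V : Type*} [DecidableEq V] {I : Type*} [DecidableEq I] [Fintype I] (S : Setup V I)

lemma uniform : IsUniform3 S.E := by
  intro e he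
  obtain ⟨i, h | h | h⟩ := S.mem_E_elim he
  · obtain ⟨v, hv, hva, rfl⟩ := h
    rw [Finset.card_insert_of_notMem, Finset.card_insert_of_notMem, Finset.card_singleton]
    · simp only [Finset.mem_singleton]
      exact Ne.symm hva
    · simp only [Finset.mem_insert, Finset.mem_singleton]
      push_neg
      exact ⟨Ne.symm (S.ne_x_of_mem_B (S.a_mem_B i)), Ne.symm (S.ne_x_of_mem_B hv)⟩
  · obtain ⟨v, hv, hvb, rfl⟩ := h
    rw [Finset.card_insert_of_notMem, Finset.card_insert_of_notMem, Finset.card_singleton]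
    · simp only [Finset.mem_singleton]
      exact Ne.symm hvb
    · simp only [Finset.mem_insert, Finset.mem_singleton]
      push_neg
      exact ⟨Ne.symm (S.ne_y_of_mem_B (S.b_mem_B i)), Ne.symm (S.ne_y_of_mem_B hv)⟩
  · rw [h.2]; exact h.1

lemma saturated : IsSat3 S.E := by
  refine ⟨S.uniform, S.no_C3, ?_⟩
  intro e hcard hne
  by_cases hx : S.x ∈ e <;> by_cases hy : S.y ∈ e
  · exact S.sat1 hcard hx hy
  · exact S.sat2x hcard hne hx hy
  · rw [← S.E_swap]
    exact S.swap.sat2x hcard (by rw [S.E_swap]; exact hne) hy hx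
  · exact S.sat4 hcard hne hx hy

lemma card_E : S.E.card = ∑ i : I, (if (S.L i).card = 3 then 9 else 6) := by
  classical
  unfold E
  rw [Finset.card_biUnion]
  · apply Finset.sum_congr rfl
    intro i _
    have hinjX : Set.InjOn (fun v => ({S.x, S.a i, v} : Finset V)) ↑(S.B i \ {S.a i}) := by
      intro v hv w hw hvw
      rw [Finset.mem_coe, Finset.mem_sdiff, Finset.mem_singleton] at hv hw
      simp only at hvw
      have : v ∈ ({S.x, S.a i, w} : Finset V) := hvw ▸ (by simp : v ∈ ({S.x, S.a i, v} : Finset V))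
      simp only [Finset.mem_insert, Finset.mem_singleton] at this
      rcases this with h | h | h
      · exact absurd h (S.ne_x_of_mem_B hv.1)
      · exact absurd h hv.2
      · exact h
    have hX : (((S.B i \ {S.a i}).image fun v => ({S.x, S.a i, v} : Finset V))).card = (S.L i).card + 1 := by
      rw [Finset.card_image_of_injOn hinjX]
      rw [Finset.card_sdiff_of_subset (Finset.singleton_subset_iff.2 (S.a_mem_B i))]
      rw [S.card_B, Finset.card_singleton]
      omega
    have hinjY : Set.InjOn (fun v => ({S.y, S.b i, v} : Finset V)) ↑(S.B i \ {S.b i}) := by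
      intro v hv w hw hvw
      rw [Finset.mem_coe, Finset.mem_sdiff, Finset.mem_singleton] at hv hw
      simp only at hvw
      have : v ∈ ({S.y, S.b i, w} : Finset V) := hvw ▸ (by simp : v ∈ ({S.y, S.b i, v} : Finset V))
      simp only [Finset.mem_insert, Finset.mem_singleton] at this
      rcases this with h | h | h
      · exact absurd h (S.ne_y_of_mem_B hv.1)
      · exact absurd h hv.2
      · exact h
    have hY : (((S.B i \ {S.b i}).image fun v => ({S.y, S.b i, v} : Finset V))).card = (S.L i).card + 1 := by
      rw [Finset.card_image_of_injOn hinjY]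
      rw [Finset.card_sdiff_of_subset (Finset.singleton_subset_iff.2 (S.b_mem_B i))]
      rw [S.card_B, Finset.card_singleton]
      omega
    have hxX : ∀ e ∈ ((S.B i \ {S.a i}).image fun v => ({S.x, S.a i, v} : Finset V)), S.x ∈ e := by
      intro e he
      obtain ⟨v, -, rfl⟩ := Finset.mem_image.1 he
      simp
    have hyY : ∀ e ∈ ((S.B i \ {S.b i}).image fun v => ({S.y, S.b i, v} : Finset V)), S.y ∈ e ∧ S.x ∉ e := by
      intro e he
      obtain ⟨v, hv, rfl⟩ := Finset.mem_image.1 he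
      rw [Finset.mem_sdiff] at hv
      refine ⟨by simp, ?_⟩
      simp only [Finset.mem_insert, Finset.mem_singleton]
      push_neg
      exact ⟨S.hxy, Ne.symm (S.ne_x_of_mem_B (S.b_mem_B i)), Ne.symm (S.ne_x_of_mem_B hv.1)⟩
    rw [Finset.card_union_of_disjoint, Finset.card_union_of_disjoint, hX, hY]
    · have h23 := S.hL2 i
      have h32 := S.hL3 i
      by_cases h3 : (S.L i).card = 3 <;> simp [h3] <;> omega
    · rw [Finset.disjoint_left]
      intro e he
      obtain ⟨v, hv, rfl⟩ := Finset.mem_image.1 he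
      rw [Finset.mem_sdiff] at hv
      intro hmem
      have hxe : S.x ∈ ({S.x, S.a i, v} : Finset V) := by simp
      have := (hyY _ hmem).2
      exact this hxe
    · rw [Finset.disjoint_left]
      intro e he hmem
      by_cases h3 : (S.L i).card = 3
      · simp only [h3, if_true, Finset.mem_singleton] at hmem
        subst hmem
        rcases Finset.mem_union.1 he with h | h
        · exact S.x_not_mem_B i (S.L_subset_B i (hxX _ h))
        · exact S.y_not_mem_B i (S.L_subset_B i (hyY _ h).1)
      · simp [h3] at hmem
  · -- pairwise disjoint over blocks
    intro i _ j _ hij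
    simp only [Function.onFun]
    rw [Finset.disjoint_left]
    intro e hei hej
    apply hij
    have key : ∀ k, e ∈ ((S.B k \ {S.a k}).image fun v => {S.x, S.a k, v}) ∪
        ((S.B k \ {S.b k}).image fun v => {S.y, S.b k, v}) ∪
        (if (S.L k).card = 3 then {S.L k} else ∅) →
        ∃ w, w ∈ e ∧ w ∈ S.B k := by
      intro k hk
      rcases Finset.mem_union.1 hk with hk | hk
      · rcases Finset.mem_union.1 hk with hk | hk
        · obtain ⟨v, hv, rfl⟩ := Finset.mem_image.1 hk
          exact ⟨S.a k, by simp, S.a_mem_B k⟩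
        · obtain ⟨v, hv, rfl⟩ := Finset.mem_image.1 hk
          exact ⟨S.b k, by simp, S.b_mem_B k⟩
      · by_cases h3 : (S.L k).card = 3
        · simp only [h3, if_true, Finset.mem_singleton] at hk
          subst hk
          obtain ⟨t, ht⟩ := Finset.card_pos.1 (by omega : 0 < (S.L k).card)
          exact ⟨t, ht, S.L_subset_B k ht⟩
        · simp [h3] at hk
    obtain ⟨w, hwe, hwi⟩ := key i hei
    -- show w forces j = i via shapes of e in F j
    rcases Finset.mem_union.1 hej with hk | hk
    · rcases Finset.mem_union.1 hk with hk | hk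
      · obtain ⟨v, hv, rfl⟩ := Finset.mem_image.1 hk
        rw [Finset.mem_sdiff] at hv
        simp only [Finset.mem_insert, Finset.mem_singleton] at hwe
        rcases hwe with rfl | rfl | rfl
        · exact absurd hwi (S.x_not_mem_B i)
        · exact S.block_eq hwi (S.a_mem_B j)
        · exact S.block_eq hwi hv.1
      · obtain ⟨v, hv, rfl⟩ := Finset.mem_image.1 hk
        rw [Finset.mem_sdiff] at hv
        simp only [Finset.mem_insert, Finset.mem_singleton] at hwe
        rcases hwe with rfl | rfl | rfl
        · exact absurd hwi (S.y_not_mem_B i)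
        · exact S.block_eq hwi (S.b_mem_B j)
        · exact S.block_eq hwi hv.1
    · by_cases h3 : (S.L j).card = 3
      · simp only [h3, if_true, Finset.mem_singleton] at hk
        subst hk
        exact S.block_eq hwi (S.L_subset_B j hwe)
      · simp [h3] at hk

end Setup
end SatCon

namespace SatCon

lemma inst (n s t : ℕ) (hn : n = 2 + 4 * s + 5 * t) (hst2 : 2 ≤ s + t) :
    ∃ E : Finset (Finset (Fin n)), IsSat3 E ∧ E.card = 6 * s + 9 * t := by
  have hn0 : 0 < n := by omega
  have hn1 : 1 < n := by omega
  set st : ℕ → ℕ := fun i => 2 + 4 * i + (i - s) with hst_def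
  set sz : ℕ → ℕ := fun i => if i < s then 4 else 5 with hsz_def
  have hszi : ∀ i, 4 ≤ sz i ∧ sz i ≤ 5 := by
    intro i; simp only [hsz_def]; by_cases hi : i < s <;> simp [hi]
  have hstlb : ∀ i, 2 ≤ st i := by intro i; simp only [hst_def]; omega
  have hsucc : ∀ i, st (i + 1) = st i + sz i := by
    intro i
    simp only [hst_def, hsz_def]
    by_cases hi : i < s <;> simp [hi] <;> omega
  have hsep : ∀ i j : ℕ, i < j → st i + sz i ≤ st j := by
    intro i j h
    simp only [hst_def, hsz_def]
    by_cases hi : i < s <;> simp [hi] <;> omega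
  have hend : st (s + t) = n := by simp only [hst_def]; omega
  have hbd : ∀ i : ℕ, i < s + t → st i + sz i ≤ n :=
    fun i h => (hsep i (s + t) h).trans (le_of_eq hend)
  let a : Fin (s + t) → Fin n := fun i =>
    ⟨st i.val, by have := hbd i.val i.isLt; have := (hszi i.val).1; omega⟩
  let b : Fin (s + t) → Fin n := fun i =>
    ⟨st i.val + 1, by have := hbd i.val i.isLt; have := (hszi i.val).1; omega⟩
  let L : Fin (s + t) → Finset (Fin n) := fun i =>
    (Finset.Ico (st i.val + 2) (st i.val + sz i.val)).attachFin
      (fun m hm => by rw [Finset.mem_Ico] at hm; have := hbd i.val i.isLt; omega)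
  have hmemL : ∀ (i : Fin (s + t)) (v : Fin n),
      v ∈ L i ↔ st i.val + 2 ≤ v.val ∧ v.val < st i.val + sz i.val := by
    intro i v
    simp [L, Finset.mem_attachFin, Finset.mem_Ico]
  have hmemB : ∀ (i : Fin (s + t)) (v : Fin n),
      v ∈ insert (a i) (insert (b i) (L i)) ↔ st i.val ≤ v.val ∧ v.val < st i.val + sz i.val := by
    intro i v
    have hai : v = a i ↔ v.val = st i.val := by
      rw [Fin.ext_iff]
    have hbi : v = b i ↔ v.val = st i.val + 1 := by
      rw [Fin.ext_iff]
    rw [Finset.mem_insert, Finset.mem_insert, hai, hbi, hmemL]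
    have := (hszi i.val).1
    omega
  have hLcard : ∀ i : Fin (s + t), (L i).card = sz i.val - 2 := by
    intro i
    rw [Finset.card_attachFin, Nat.card_Ico]
    omega
  let S : Setup (Fin n) (Fin (s + t)) :=
    { x := ⟨0, hn0⟩
      y := ⟨1, hn1⟩
      a := a
      b := b
      L := L
      hxy := by simp [Fin.ext_iff]
      hxB := fun i => by
        intro h
        rw [hmemB] at h
        have := hstlb i.val
        simp only [Fin.val_mk] at h
        omega
      hyB := fun i => by
        intro h
        rw [hmemB] at h
        have := hstlb i.val
        simp only [Fin.val_mk] at h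
        omega
      hab := fun i => by simp [a, b, Fin.ext_iff]
      haL := fun i => by
        intro h
        rw [hmemL] at h
        simp only [a, Fin.val_mk] at h
        omega
      hbL := fun i => by
        intro h
        rw [hmemL] at h
        simp only [b, Fin.val_mk] at h
        omega
      hL2 := fun i => by rw [hLcard]; have := (hszi i.val).1; omega
      hL3 := fun i => by rw [hLcard]; have := (hszi i.val).2; omega
      hdisj := fun i j hij => by
        rw [Finset.disjoint_left]
        intro v hvi hvj
        rw [hmemB] at hvi hvj
        have hne : i.val ≠ j.val := fun h => hij (Fin.ext h)
        rcases Nat.lt_or_ge i.val j.val with h | h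
        · have := hsep i.val j.val h
          omega
        · have := hsep j.val i.val (by omega)
          omega
      hex := fun u => by
        by_cases h : st 0 ≤ u.val ∧ u.val < st 0 + sz 0
        · refine ⟨⟨1, by omega⟩, fun hmem => ?_⟩
          rw [hmemB] at hmem
          simp only [Fin.val_mk] at hmem
          have := hsep 0 1 (by omega)
          omega
        · refine ⟨⟨0, by omega⟩, fun hmem => ?_⟩
          rw [hmemB] at hmem
          simp only [Fin.val_mk] at hmem
          exact h hmem
      hcover := fun v => by
        by_cases h0 : v.val = 0
        · exact Or.inl (Fin.ext h0)
        by_cases h1 : v.val = 1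
        · exact Or.inr (Or.inl (Fin.ext h1))
        refine Or.inr (Or.inr ?_)
        have key : ∀ K : ℕ, K ≤ s + t → v.val < st K →
            ∃ i : ℕ, i < s + t ∧ st i ≤ v.val ∧ v.val < st i + sz i := by
          intro K
          induction K with
          | zero =>
            intro _ hlt
            exfalso
            have : st 0 = 2 := by simp [hst_def]
            omega
          | succ K ih =>
            intro hK hlt
            by_cases hKle : st K ≤ v.val
            · refine ⟨K, by omega, hKle, ?_⟩
              have := hsucc K
              omega
            · exact ih (by omega) (by omega)
        obtain ⟨i, hi, h2, h3⟩ := key (s + t) le_rfl (by rw [hend]; exact v.isLt)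
        exact ⟨⟨i, hi⟩, (hmemB ⟨i, hi⟩ v).2 ⟨h2, h3⟩⟩ }
  refine ⟨S.E, S.saturated, ?_⟩
  rw [S.card_E]
  have hterm : ∀ i : Fin (s + t),
      (if ((S.L i).card = 3) then (9 : ℕ) else 6) = (fun k => if k < s then (6 : ℕ) else 9) i.val := by
    intro i
    show (if ((L i).card = 3) then (9 : ℕ) else 6) = _
    rw [hLcard]
    simp only [hsz_def]
    by_cases hi : i.val < s <;> simp [hi]
  rw [Finset.sum_congr rfl (fun i _ => hterm i)]
  rw [Fin.sum_univ_eq_sum_range (fun k => if k < s then (6 : ℕ) else 9) (s + t)]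
  rw [Finset.range_eq_Ico, ← Finset.sum_Ico_consecutive _ (Nat.zero_le s) (Nat.le_add_right s t)]
  have h1 : ∑ i ∈ Finset.Ico 0 s, (if i < s then (6 : ℕ) else 9) = 6 * s := by
    rw [Finset.sum_congr rfl (fun i hi => if_pos (Finset.mem_Ico.1 hi).2), Finset.sum_const,
      Nat.card_Ico, smul_eq_mul]
    omega
  have h2 : ∑ i ∈ Finset.Ico s (s + t), (if i < s then (6 : ℕ) else 9) = 9 * t := by
    rw [Finset.sum_congr rfl (fun i hi => if_neg (by
      have := (Finset.mem_Ico.1 hi).1; omega)), Finset.sum_const, Nat.card_Ico, smul_eq_mul]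
    omega
  rw [h1, h2]

end SatCon


theorem construction_exists (n m c : ℕ) (hn : 14 ≤ n)
    (hnmc : n = 4 * m + c) (hc2 : 2 ≤ c) (hc5 : c ≤ 5) :
    ∃ E : Finset (Finset (Fin n)), IsSat3 E ∧ (E.card : ℤ) = 6 * m + 3 * c - 6 := by
  obtain ⟨E, hsat, hcard⟩ := SatCon.inst n (m + 2 - c) (c - 2) (by omega) (by omega)
  refine ⟨E, hsat, ?_⟩
  rw [hcard]
  omega
end

section
/- Let G be a C_3^{(3)}-saturated 3-uniform hypergraph on n vertices and let u, v be distinct vertices with d(uv) = d(v) and d(v) ≤ n − 3. Then d(u) ≥ d(v) + 2. -/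
open Finset

variable {V : Type*}

lemma extract_aux {V : Type*} [DecidableEq V] {E : Finset (Finset V)} {e : Finset V}
    (hfree : ¬ HasC3 E) (h : HasC3 (insert e E)) :
    ∃ f ∈ E, ∃ g ∈ E, ∃ a b c : V,
      e ∩ f = {a} ∧ f ∩ g = {b} ∧ e ∩ g = {c} ∧
      a ≠ b ∧ b ≠ c ∧ a ≠ c ∧ e ∩ f ∩ g = ∅ := by
  obtain ⟨e₁, h₁, e₂, h₂, e₃, h₃, a, b, c, h12, h23, h13, hab, hbc, hac, htri⟩ := h
  rw [Finset.mem_insert] at h₁ h₂ h₃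
  have hne12 : e₁ ≠ e₂ := by
    rintro rfl
    rw [h13] at h23
    exact hbc (Finset.singleton_inj.mp h23).symm
  have hne13 : e₁ ≠ e₃ := by
    rintro rfl
    rw [Finset.inter_comm] at h23
    rw [h12] at h23
    exact hab (Finset.singleton_inj.mp h23)
  have hne23 : e₂ ≠ e₃ := by
    rintro rfl
    rw [h12] at h13
    exact hac (Finset.singleton_inj.mp h13)
  rcases h₁ with rfl | h₁
  · have h₂' : e₂ ∈ E := h₂.resolve_left (fun hh => hne12 hh.symm)
    have h₃' : e₃ ∈ E := h₃.resolve_left (fun hh => hne13 hh.symm)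
    exact ⟨e₂, h₂', e₃, h₃', a, b, c, h12, h23, h13, hab, hbc, hac, htri⟩
  · rcases h₂ with rfl | h₂
    · have h₃' : e₃ ∈ E := h₃.resolve_left (fun hh => hne23 hh.symm)
      refine ⟨e₁, h₁, e₃, h₃', a, c, b, by rw [Finset.inter_comm]; exact h12, h13, h23,
        hac, hbc.symm, hab, ?_⟩
      rw [Finset.inter_comm e₂ e₁]; exact htri
    · rcases h₃ with rfl | h₃
      · refine ⟨e₂, h₂, e₁, h₁, b, a, c, by rw [Finset.inter_comm]; exact h23,
          by rw [Finset.inter_comm]; exact h12, by rw [Finset.inter_comm]; exact h13,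
          hab.symm, hac, hbc, ?_⟩
        have : e₃ ∩ e₂ ∩ e₁ = e₁ ∩ e₂ ∩ e₃ := by
          rw [Finset.inter_comm e₃ e₂, Finset.inter_assoc, Finset.inter_comm e₃ e₁,
            ← Finset.inter_assoc, Finset.inter_comm e₂ e₁]
        rw [this]; exact htri
      · exact absurd ⟨e₁, h₁, e₂, h₂, e₃, h₃, a, b, c, h12, h23, h13, hab, hbc, hac, htri⟩ hfree

theorem codeg_eq_deg_imp_deg_ge {V : Type*} [Fintype V] [DecidableEq V]
    (E : Finset (Finset V)) (hsat : IsSat3 E) (u v : V) (huv : u ≠ v)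
    (hcod : codeg E u v = deg E v)
    (hdv : (deg E v : ℤ) ≤ (Fintype.card V : ℤ) - 3) :
    deg E v + 2 ≤ deg E u := by
  obtain ⟨hunif, hfree, hsatur⟩ := hsat
  -- every edge containing v contains u
  have key : ∀ e ∈ E, v ∈ e → u ∈ e := by
    have hsub : E.filter (fun e => u ∈ e ∧ v ∈ e) ⊆ E.filter (fun e => v ∈ e) := by
      intro e he
      rw [Finset.mem_filter] at he ⊢
      exact ⟨he.1, he.2.2⟩
    have heq : E.filter (fun e => u ∈ e ∧ v ∈ e) = E.filter (fun e => v ∈ e) :=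
      Finset.eq_of_subset_of_card_le hsub (le_of_eq hcod.symm)
    intro e he hv
    have h' : e ∈ E.filter (fun e => v ∈ e) := Finset.mem_filter.mpr ⟨he, hv⟩
    rw [← heq, Finset.mem_filter] at h'
    exact h'.2.1
  have hn : deg E v + 3 ≤ Fintype.card V := by
    have : (deg E v : ℤ) + 3 ≤ (Fintype.card V : ℤ) := by linarith
    exact_mod_cast this
  -- find w outside all edges containing v
  obtain ⟨w, hw⟩ : ∃ w, w ∉ ({u, v} : Finset V) ∪
      (E.filter (fun e => v ∈ e)).biUnion (fun e => e \ {u, v}) := by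
    set K := ({u, v} : Finset V) ∪
      (E.filter (fun e => v ∈ e)).biUnion (fun e => e \ {u, v}) with hK
    by_contra hcon
    push_neg at hcon
    have huniv : (Finset.univ : Finset V) ⊆ K := fun x _ => hcon x
    have h1 : Fintype.card V ≤ K.card := by
      rw [← Finset.card_univ]
      exact Finset.card_le_card huniv
    have h2 : K.card ≤ 2 + deg E v := by
      calc K.card ≤ ({u, v} : Finset V).card +
            ((E.filter (fun e => v ∈ e)).biUnion (fun e => e \ {u, v})).card :=
            Finset.card_union_le _ _
        _ ≤ 2 + deg E v := by
            gcongr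
            · exact le_trans (Finset.card_insert_le _ _) (by simp)
            · calc ((E.filter (fun e => v ∈ e)).biUnion (fun e => e \ {u, v})).card
                  ≤ ∑ e ∈ E.filter (fun e => v ∈ e), (e \ {u, v}).card :=
                    Finset.card_biUnion_le
                _ ≤ ∑ _e ∈ E.filter (fun e => v ∈ e), 1 := by
                    apply Finset.sum_le_sum
                    intro e he
                    rw [Finset.mem_filter] at he
                    have hu : u ∈ e := key e he.1 he.2
                    have hsub2 : ({u, v} : Finset V) ⊆ e := by
                      intro z hz
                      rw [Finset.mem_insert, Finset.mem_singleton] at hz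
                      rcases hz with rfl | rfl
                      · exact hu
                      · exact he.2
                    rw [Finset.card_sdiff_of_subset hsub2, hunif e he.1,
                      Finset.card_insert_of_notMem (by simp [huv]), Finset.card_singleton]
                _ = deg E v := by rw [Finset.sum_const, smul_eq_mul, mul_one]; rfl
    omega
  rw [Finset.mem_union, not_or, Finset.mem_insert, Finset.mem_singleton] at hw
  obtain ⟨hw1, hw2⟩ := hw
  push_neg at hw1
  obtain ⟨hwu, hwv⟩ := hw1
  have hwe : ∀ e ∈ E, v ∈ e → w ∉ e := by
    intro e he hv hwmem
    apply hw2
    rw [Finset.mem_biUnion]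
    exact ⟨e, Finset.mem_filter.mpr ⟨he, hv⟩, Finset.mem_sdiff.mpr ⟨hwmem, by
      simp [hwu, hwv]⟩⟩
  -- the triple {u, v, w}
  have he₀card : ({u, v, w} : Finset V).card = 3 :=
    Finset.card_eq_three.mpr ⟨u, v, w, huv, Ne.symm hwu, Ne.symm hwv, rfl⟩
  have he₀E : ({u, v, w} : Finset V) ∉ E := fun h =>
    hwe _ h (by simp) (by simp)
  obtain ⟨f₀, hf₀E, huf₀, hvf₀⟩ : ∃ f₀ ∈ E, u ∈ f₀ ∧ v ∉ f₀ := by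
    obtain ⟨f, hfE, g, hgE, a, b, c, h1, h2, h3, hab, hbc, hac, htri⟩ :=
      extract_aux hfree (hsatur _ he₀card he₀E)
    have haf : a ∈ ({u, v, w} : Finset V) ∩ f := by rw [h1]; exact Finset.mem_singleton_self a
    rw [Finset.mem_inter] at haf
    have hcg : c ∈ ({u, v, w} : Finset V) ∩ g := by rw [h3]; exact Finset.mem_singleton_self c
    rw [Finset.mem_inter] at hcg
    have hav : a ≠ v := by
      intro hh
      have hu : u ∈ f := key f hfE (hh ▸ haf.2)
      have h' : u ∈ ({u, v, w} : Finset V) ∩ f := Finset.mem_inter.mpr ⟨by simp, hu⟩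
      rw [h1, Finset.mem_singleton] at h'
      exact huv (h'.trans hh)
    have hcv : c ≠ v := by
      intro hh
      have hu : u ∈ g := key g hgE (hh ▸ hcg.2)
      have h' : u ∈ ({u, v, w} : Finset V) ∩ g := Finset.mem_inter.mpr ⟨by simp, hu⟩
      rw [h3, Finset.mem_singleton] at h'
      exact huv (h'.trans hh)
    have ha' : a = u ∨ a = w := by
      have hm := haf.1
      simp only [Finset.mem_insert, Finset.mem_singleton] at hm
      tauto
    rcases ha' with hau | haw
    · refine ⟨f, hfE, hau ▸ haf.2, fun hvf => ?_⟩
      have h' : v ∈ ({u, v, w} : Finset V) ∩ f := Finset.mem_inter.mpr ⟨by simp, hvf⟩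
      rw [h1, Finset.mem_singleton] at h'
      exact hav h'.symm
    · have hcu : c = u := by
        have hm := hcg.1
        simp only [Finset.mem_insert, Finset.mem_singleton] at hm
        rcases hm with h | h | h
        · exact h
        · exact absurd h hcv
        · exact absurd (h.trans haw.symm) hac.symm
      refine ⟨g, hgE, hcu ▸ hcg.2, fun hvg => ?_⟩
      have h' : v ∈ ({u, v, w} : Finset V) ∩ g := Finset.mem_inter.mpr ⟨by simp, hvg⟩
      rw [h3, Finset.mem_singleton] at h'
      exact hcv h'.symm
  -- decomposition of deg u
  by_contra hlt
  push_neg at hlt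
  have hdecomp : deg E u = codeg E u v + (E.filter fun e => u ∈ e ∧ v ∉ e).card := by
    have hsplit : E.filter (fun e => u ∈ e) =
        E.filter (fun e => u ∈ e ∧ v ∈ e) ∪ E.filter (fun e => u ∈ e ∧ v ∉ e) := by
      ext e
      simp only [Finset.mem_filter, Finset.mem_union]
      tauto
    have hdisj : Disjoint (E.filter fun e => u ∈ e ∧ v ∈ e)
        (E.filter fun e => u ∈ e ∧ v ∉ e) := by
      rw [Finset.disjoint_left]
      intro e he1 he2
      rw [Finset.mem_filter] at he1 he2
      exact he2.2.2 he1.2.2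
    show (E.filter fun e => u ∈ e).card = _
    rw [hsplit, Finset.card_union_of_disjoint hdisj]
    rfl
  have hB1 : (E.filter fun e => u ∈ e ∧ v ∉ e).card ≤ 1 := by omega
  have hB : ∀ g' ∈ E, u ∈ g' → v ∉ g' → g' = f₀ := by
    intro g' hg' hug' hvg'
    have m1 : g' ∈ E.filter fun e => u ∈ e ∧ v ∉ e := Finset.mem_filter.mpr ⟨hg', hug', hvg'⟩
    have m2 : f₀ ∈ E.filter fun e => u ∈ e ∧ v ∉ e := Finset.mem_filter.mpr ⟨hf₀E, huf₀, hvf₀⟩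
    exact Finset.card_le_one.mp hB1 _ m1 _ m2
  -- structure of f₀ = {u, p, q}
  obtain ⟨p, q, hpq, hpqeq⟩ : ∃ p q : V, p ≠ q ∧ f₀ \ {u} = {p, q} := by
    apply Finset.card_eq_two.mp
    rw [Finset.card_sdiff_of_subset (Finset.singleton_subset_iff.mpr huf₀), hunif f₀ hf₀E,
      Finset.card_singleton]
  have hpf₀ : p ∈ f₀ ∧ p ≠ u := by
    have hm : p ∈ f₀ \ {u} := by rw [hpqeq]; simp
    rw [Finset.mem_sdiff, Finset.mem_singleton] at hm
    exact hm
  have hqf₀ : q ∈ f₀ ∧ q ≠ u := by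
    have hm : q ∈ f₀ \ {u} := by rw [hpqeq]; simp
    rw [Finset.mem_sdiff, Finset.mem_singleton] at hm
    exact hm
  have hpv : p ≠ v := fun h => hvf₀ (h ▸ hpf₀.1)
  have hqv : q ≠ v := fun h => hvf₀ (h ▸ hqf₀.1)
  have hf₀elem : ∀ z ∈ f₀, z = u ∨ z = p ∨ z = q := by
    intro z hz
    by_cases hzu : z = u
    · exact Or.inl hzu
    · have hm : z ∈ f₀ \ {u} := Finset.mem_sdiff.mpr ⟨hz, by simpa using hzu⟩
      rw [hpqeq] at hm
      simp only [Finset.mem_insert, Finset.mem_singleton] at hm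
      exact Or.inr hm
  -- the triple t = {v, p, q}
  have htcard : ({v, p, q} : Finset V).card = 3 :=
    Finset.card_eq_three.mpr ⟨v, p, q, Ne.symm hpv, Ne.symm hqv, hpq, rfl⟩
  have hut : u ∉ ({v, p, q} : Finset V) := by
    simp only [Finset.mem_insert, Finset.mem_singleton]
    push_neg
    exact ⟨huv, Ne.symm hpf₀.2, Ne.symm hqf₀.2⟩
  have htE : ({v, p, q} : Finset V) ∉ E := fun h => hut (key _ h (by simp))
  obtain ⟨f', hf', g', hg', a, b, c, h1, h2, h3, hab, hbc, hac, htri⟩ :=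
    extract_aux hfree (hsatur _ htcard htE)
  -- helper: case where the endpoint in f is v
  have Hv : ∀ (f g : Finset V) (a b c : V), f ∈ E → g ∈ E →
      ({v, p, q} : Finset V) ∩ f = {a} → f ∩ g = {b} → ({v, p, q} : Finset V) ∩ g = {c} →
      a ≠ b → b ≠ c → a ≠ c → a = v → False := by
    intro f g a b c hfE hgE h1 h2 h3 hab hbc hac hav
    rw [hav] at h1 hab hac
    have hvf : v ∈ f := by
      have hm : v ∈ ({v, p, q} : Finset V) ∩ f := by rw [h1]; exact Finset.mem_singleton_self v
      exact (Finset.mem_inter.mp hm).2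
    have huf : u ∈ f := key f hfE hvf
    have hpf : p ∉ f := by
      intro hh
      have hm : p ∈ ({v, p, q} : Finset V) ∩ f := Finset.mem_inter.mpr ⟨by simp, hh⟩
      rw [h1, Finset.mem_singleton] at hm
      exact hpv hm
    have hqf : q ∉ f := by
      intro hh
      have hm : q ∈ ({v, p, q} : Finset V) ∩ f := Finset.mem_inter.mpr ⟨by simp, hh⟩
      rw [h1, Finset.mem_singleton] at hm
      exact hqv hm
    -- third vertex x of f
    obtain ⟨x, hx⟩ : ∃ x, f \ {u, v} = {x} := by
      apply Finset.card_eq_one.mp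
      have hsub2 : ({u, v} : Finset V) ⊆ f := by
        intro z hz
        rw [Finset.mem_insert, Finset.mem_singleton] at hz
        rcases hz with rfl | rfl
        · exact huf
        · exact hvf
      rw [Finset.card_sdiff_of_subset hsub2, hunif f hfE,
        Finset.card_insert_of_notMem (by simp [huv]), Finset.card_singleton]
    have hxf : x ∈ f ∧ x ≠ u ∧ x ≠ v := by
      have hm : x ∈ f \ {u, v} := by rw [hx]; simp
      rw [Finset.mem_sdiff, Finset.mem_insert, Finset.mem_singleton] at hm
      exact ⟨hm.1, fun h => hm.2 (Or.inl h), fun h => hm.2 (Or.inr h)⟩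
    have hfelem : ∀ z ∈ f, z = u ∨ z = v ∨ z = x := by
      intro z hz
      by_cases hzu : z = u
      · exact Or.inl hzu
      · by_cases hzv : z = v
        · exact Or.inr (Or.inl hzv)
        · have hm : z ∈ f \ {u, v} := Finset.mem_sdiff.mpr ⟨hz, by simp [hzu, hzv]⟩
          rw [hx, Finset.mem_singleton] at hm
          exact Or.inr (Or.inr hm)
    have hxp : x ≠ p := fun h => hpf (h ▸ hxf.1)
    have hxq : x ≠ q := fun h => hqf (h ▸ hxf.1)
    -- c facts
    have hcg : c ∈ ({v, p, q} : Finset V) ∧ c ∈ g := by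
      have hm : c ∈ ({v, p, q} : Finset V) ∩ g := by rw [h3]; exact Finset.mem_singleton_self c
      exact Finset.mem_inter.mp hm
    have hvg : v ∉ g := by
      intro hh
      have hm : v ∈ ({v, p, q} : Finset V) ∩ g := Finset.mem_inter.mpr ⟨by simp, hh⟩
      rw [h3, Finset.mem_singleton] at hm
      exact hac hm
    have hcpq : c = p ∨ c = q := by
      have hm := hcg.1
      simp only [Finset.mem_insert, Finset.mem_singleton] at hm
      rcases hm with h | h | h
      · exact absurd h.symm hac
      · exact Or.inl h
      · exact Or.inr h
    -- b facts
    have hbfg : b ∈ f ∧ b ∈ g := by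
      have hm : b ∈ f ∩ g := by rw [h2]; exact Finset.mem_singleton_self b
      exact Finset.mem_inter.mp hm
    have hbux : b = u ∨ b = x := by
      rcases hfelem b hbfg.1 with h | h | h
      · exact Or.inl h
      · exact absurd h.symm hab
      · exact Or.inr h
    rcases hbux with hbu | hbx
    · -- b = u : then g = f₀, but p,q ∈ t∩g = {c}, contradiction
      have hgf₀ : g = f₀ := hB g hgE (hbu ▸ hbfg.2) hvg
      have hpm : p ∈ ({v, p, q} : Finset V) ∩ g :=
        Finset.mem_inter.mpr ⟨by simp, hgf₀ ▸ hpf₀.1⟩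
      have hqm : q ∈ ({v, p, q} : Finset V) ∩ g :=
        Finset.mem_inter.mpr ⟨by simp, hgf₀ ▸ hqf₀.1⟩
      rw [h3, Finset.mem_singleton] at hpm hqm
      exact hpq (hpm.trans hqm.symm)
    · -- b = x : build a C3 from f₀, f, g
      have hug : u ∉ g := by
        intro hh
        have hgf₀ : g = f₀ := hB g hgE hh hvg
        rcases hf₀elem x (by rw [← hgf₀, ← hbx]; exact hbfg.2) with h | h | h
        · exact hxf.2.1 h
        · exact hxp h
        · exact hxq h
      have hcf₀ : c ∈ f₀ := by
        rcases hcpq with h | h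
        · exact h ▸ hpf₀.1
        · exact h ▸ hqf₀.1
      apply hfree
      refine ⟨f₀, hf₀E, f, hfE, g, hgE, u, x, c, ?_, hbx ▸ h2, ?_, ?_, hbx ▸ hbc, ?_, ?_⟩
      · -- f₀ ∩ f = {u}
        ext z
        rw [Finset.mem_inter, Finset.mem_singleton]
        constructor
        · rintro ⟨hz1, hz2⟩
          rcases hf₀elem z hz1 with h | h | h
          · exact h
          · exact absurd (h ▸ hz2) hpf
          · exact absurd (h ▸ hz2) hqf
        · rintro rfl; exact ⟨huf₀, huf⟩
      · -- f₀ ∩ g = {c}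
        ext z
        rw [Finset.mem_inter, Finset.mem_singleton]
        constructor
        · rintro ⟨hz1, hz2⟩
          rcases hf₀elem z hz1 with h | h | h
          · exact absurd (h ▸ hz2) hug
          · have hm : z ∈ ({v, p, q} : Finset V) ∩ g :=
              Finset.mem_inter.mpr ⟨by simp [h], hz2⟩
            rw [h3, Finset.mem_singleton] at hm
            exact hm
          · have hm : z ∈ ({v, p, q} : Finset V) ∩ g :=
              Finset.mem_inter.mpr ⟨by simp [h], hz2⟩
            rw [h3, Finset.mem_singleton] at hm
            exact hm
        · rintro rfl; exact ⟨hcf₀, hcg.2⟩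
      · -- u ≠ x
        exact fun h => hxf.2.1 h.symm
      · -- u ≠ c
        intro h
        rcases hcpq with h' | h'
        · exact hpf₀.2 ((h'.symm.trans h.symm))
        · exact hqf₀.2 ((h'.symm.trans h.symm))
      · -- triple empty
        rw [Finset.eq_empty_iff_forall_notMem]
        intro z hz
        rw [Finset.mem_inter, Finset.mem_inter] at hz
        have hzb : z = x := by
          have hm : z ∈ f ∩ g := Finset.mem_inter.mpr ⟨hz.1.2, hz.2⟩
          rw [h2, Finset.mem_singleton] at hm
          exact hm.trans hbx
        rcases hf₀elem z hz.1.1 with h | h | h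
        · exact hxf.2.1 (hzb ▸ h : x = u)
        · exact hxp (hzb ▸ h : x = p)
        · exact hxq (hzb ▸ h : x = q)
  -- now the three cases
  have haf : a ∈ ({v, p, q} : Finset V) ∧ a ∈ f' := by
    have hm : a ∈ ({v, p, q} : Finset V) ∩ f' := by rw [h1]; exact Finset.mem_singleton_self a
    exact Finset.mem_inter.mp hm
  have hcg : c ∈ ({v, p, q} : Finset V) ∧ c ∈ g' := by
    have hm : c ∈ ({v, p, q} : Finset V) ∩ g' := by rw [h3]; exact Finset.mem_singleton_self c
    exact Finset.mem_inter.mp hm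
  by_cases hav : a = v
  · exact Hv f' g' a b c hf' hg' h1 h2 h3 hab hbc hac hav
  by_cases hcv : c = v
  · exact Hv g' f' c b a hg' hf' h3 (by rw [Finset.inter_comm]; exact h2) h1
      hbc.symm hab.symm hac.symm hcv
  -- neither endpoint is v
  have hapq : a = p ∨ a = q := by
    have hm := haf.1
    simp only [Finset.mem_insert, Finset.mem_singleton] at hm
    tauto
  have hcpq : c = p ∨ c = q := by
    have hm := hcg.1
    simp only [Finset.mem_insert, Finset.mem_singleton] at hm
    tauto
  have hvf' : v ∉ f' := by
    intro hh
    have hm : v ∈ ({v, p, q} : Finset V) ∩ f' := Finset.mem_inter.mpr ⟨by simp, hh⟩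
    rw [h1, Finset.mem_singleton] at hm
    exact hav hm.symm
  have hvg' : v ∉ g' := by
    intro hh
    have hm : v ∈ ({v, p, q} : Finset V) ∩ g' := Finset.mem_inter.mpr ⟨by simp, hh⟩
    rw [h3, Finset.mem_singleton] at hm
    exact hcv hm.symm
  have huf' : u ∉ f' := by
    intro hh
    have hf₀' : f' = f₀ := hB f' hf' hh hvf'
    have hpm : p ∈ ({v, p, q} : Finset V) ∩ f' :=
      Finset.mem_inter.mpr ⟨by simp, hf₀' ▸ hpf₀.1⟩
    have hqm : q ∈ ({v, p, q} : Finset V) ∩ f' :=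
      Finset.mem_inter.mpr ⟨by simp, hf₀' ▸ hqf₀.1⟩
    rw [h1, Finset.mem_singleton] at hpm hqm
    exact hpq (hpm.trans hqm.symm)
  have hug' : u ∉ g' := by
    intro hh
    have hf₀' : g' = f₀ := hB g' hg' hh hvg'
    have hpm : p ∈ ({v, p, q} : Finset V) ∩ g' :=
      Finset.mem_inter.mpr ⟨by simp, hf₀' ▸ hpf₀.1⟩
    have hqm : q ∈ ({v, p, q} : Finset V) ∩ g' :=
      Finset.mem_inter.mpr ⟨by simp, hf₀' ▸ hqf₀.1⟩
    rw [h3, Finset.mem_singleton] at hpm hqm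
    exact hpq (hpm.trans hqm.symm)
  have haf₀ : a ∈ f₀ := by
    rcases hapq with h | h
    · exact h ▸ hpf₀.1
    · exact h ▸ hqf₀.1
  have hcf₀ : c ∈ f₀ := by
    rcases hcpq with h | h
    · exact h ▸ hpf₀.1
    · exact h ▸ hqf₀.1
  apply hfree
  refine ⟨f', hf', f₀, hf₀E, g', hg', a, c, b, ?_, ?_, h2, hac, hbc.symm, hab, ?_⟩
  · -- f' ∩ f₀ = {a}
    ext z
    rw [Finset.mem_inter, Finset.mem_singleton]
    constructor
    · rintro ⟨hz1, hz2⟩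
      rcases hf₀elem z hz2 with h | h | h
      · exact absurd (h ▸ hz1) huf'
      · have hm : z ∈ ({v, p, q} : Finset V) ∩ f' :=
          Finset.mem_inter.mpr ⟨by simp [h], hz1⟩
        rw [h1, Finset.mem_singleton] at hm
        exact hm
      · have hm : z ∈ ({v, p, q} : Finset V) ∩ f' :=
          Finset.mem_inter.mpr ⟨by simp [h], hz1⟩
        rw [h1, Finset.mem_singleton] at hm
        exact hm
    · rintro rfl; exact ⟨haf.2, haf₀⟩
  · -- f₀ ∩ g' = {c}
    ext z
    rw [Finset.mem_inter, Finset.mem_singleton]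
    constructor
    · rintro ⟨hz1, hz2⟩
      rcases hf₀elem z hz1 with h | h | h
      · exact absurd (h ▸ hz2) hug'
      · have hm : z ∈ ({v, p, q} : Finset V) ∩ g' :=
          Finset.mem_inter.mpr ⟨by simp [h], hz2⟩
        rw [h3, Finset.mem_singleton] at hm
        exact hm
      · have hm : z ∈ ({v, p, q} : Finset V) ∩ g' :=
          Finset.mem_inter.mpr ⟨by simp [h], hz2⟩
        rw [h3, Finset.mem_singleton] at hm
        exact hm
    · rintro rfl; exact ⟨hcf₀, hcg.2⟩
  · -- triple empty
    rw [Finset.eq_empty_iff_forall_notMem]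
    intro z hz
    rw [Finset.mem_inter, Finset.mem_inter] at hz
    have hza : z = a := by
      have hm : z ∈ ({v, p, q} : Finset V) ∩ f' := by
        refine Finset.mem_inter.mpr ⟨?_, hz.1.1⟩
        rcases hf₀elem z hz.1.2 with h | h | h
        · exact absurd (h ▸ hz.1.1) huf'
        · simp [h]
        · simp [h]
      rw [h1, Finset.mem_singleton] at hm
      exact hm
    have hzc : z = c := by
      have hm : z ∈ ({v, p, q} : Finset V) ∩ g' := by
        refine Finset.mem_inter.mpr ⟨?_, hz.2⟩
        rcases hf₀elem z hz.1.2 with h | h | h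
        · exact absurd (h ▸ hz.2) hug'
        · simp [h]
        · simp [h]
      rw [h3, Finset.mem_singleton] at hm
      exact hm
    exact hac (hza.symm.trans hzc)
end

section
/- Let G be a C_3^{(3)}-saturated 3-uniform hypergraph on n ≥ 5 vertices and let u, v be distinct vertices with d(uv) = d(v) = 2. Then v is the only vertex of degree 2 that is a double neighbor of u; that is, there is no vertex w ∉ {u, v} with d(w) = 2 and d(uw) ≥ 2. -/
open Finset

variable {V : Type*}

lemma card3 [DecidableEq V] {a b c : V} (hab : a ≠ b) (hac : a ≠ c) (hbc : b ≠ c) :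
    ({a, b, c} : Finset V).card = 3 := by
  rw [card_insert_of_notMem (by simp [hab, hac]),
    card_insert_of_notMem (by simp [hbc]), card_singleton]

/-- From a `C₃` created by inserting a non-edge `e` into a `C₃`-free hypergraph,
extract the two old edges and the anchor vertices. -/
lemma extract [DecidableEq V] {E : Finset (Finset V)} (hfree : ¬ HasC3 E)
    {e : Finset V} (h : HasC3 (insert e E)) :
    ∃ g ∈ E, ∃ h' ∈ E, ∃ α γ m : V,
      e ∩ g = {α} ∧ e ∩ h' = {γ} ∧ g ∩ h' = {m} ∧ α ≠ γ ∧ α ≠ m ∧ γ ≠ m := by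
  obtain ⟨e₁, he₁, e₂, he₂, e₃, he₃, a, b, c, h12, h23, h13, hab, hbc, hac, htri⟩ := h
  have d12 : e₁ ≠ e₂ := by
    rintro rfl
    exact hbc (Finset.singleton_injective (h23.symm.trans h13))
  have d13 : e₁ ≠ e₃ := by
    rintro rfl
    rw [inter_comm] at h23
    exact hab (Finset.singleton_injective (h12.symm.trans h23))
  have d23 : e₂ ≠ e₃ := by
    rintro rfl
    exact hac (Finset.singleton_injective (h12.symm.trans h13))
  rcases mem_insert.mp he₁ with rfl | h1
  · have h2 : e₂ ∈ E := by
      rcases mem_insert.mp he₂ with hh | hh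
      · exact absurd hh.symm d12
      · exact hh
    have h3 : e₃ ∈ E := by
      rcases mem_insert.mp he₃ with hh | hh
      · exact absurd hh.symm d13
      · exact hh
    exact ⟨e₂, h2, e₃, h3, a, c, b, h12, h13, h23, hac, hab, hbc.symm⟩
  rcases mem_insert.mp he₂ with rfl | h2
  · have h3 : e₃ ∈ E := by
      rcases mem_insert.mp he₃ with hh | hh
      · exact absurd hh.symm d23
      · exact hh
    rw [inter_comm] at h12
    exact ⟨e₁, h1, e₃, h3, a, b, c, h12, h23, h13, hab, hac, hbc⟩
  rcases mem_insert.mp he₃ with rfl | h3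
  · rw [inter_comm] at h13 h23
    exact ⟨e₁, h1, e₂, h2, c, b, a, h13, h23, h12, hbc.symm, hac.symm, hab.symm⟩
  · exact absurd ⟨e₁, h1, e₂, h2, e₃, h3, a, b, c, h12, h23, h13, hab, hbc, hac, htri⟩ hfree

theorem unique_deg_two_double_neighbor {V : Type*} [Fintype V] [DecidableEq V]
    (E : Finset (Finset V)) (hsat : IsSat3 E) (hcard : 5 ≤ Fintype.card V)
    (u v : V) (huv : u ≠ v) (hcod : codeg E u v = 2) (hdv : deg E v = 2) :
    ¬ ∃ w : V, w ≠ u ∧ w ≠ v ∧ deg E w = 2 ∧ 2 ≤ codeg E u w := by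
  rintro ⟨w, hwu, hwv, hdw, hcodw⟩
  obtain ⟨hunif, hfree, hadd⟩ := hsat
  simp only [deg, codeg] at hcod hdv hdw hcodw
  -- every edge containing v contains u
  have hv : ∀ g ∈ E, v ∈ g → u ∈ g := by
    intro g hg hvg
    have hsub : E.filter (fun e => u ∈ e ∧ v ∈ e) ⊆ E.filter (fun e => v ∈ e) := by
      intro x hx; rw [mem_filter] at hx ⊢; exact ⟨hx.1, hx.2.2⟩
    have heq := eq_of_subset_of_card_le hsub (by rw [hdv, hcod])
    have hmem : g ∈ E.filter (fun e => v ∈ e) := mem_filter.mpr ⟨hg, hvg⟩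
    rw [← heq, mem_filter] at hmem
    exact hmem.2.1
  -- every edge containing w contains u
  have hw' : ∀ g ∈ E, w ∈ g → u ∈ g := by
    intro g hg hwg
    have hsub : E.filter (fun e => u ∈ e ∧ w ∈ e) ⊆ E.filter (fun e => w ∈ e) := by
      intro x hx; rw [mem_filter] at hx ⊢; exact ⟨hx.1, hx.2.2⟩
    have heq := eq_of_subset_of_card_le hsub (by rw [hdw]; exact hcodw)
    have hmem : g ∈ E.filter (fun e => w ∈ e) := mem_filter.mpr ⟨hg, hwg⟩
    rw [← heq, mem_filter] at hmem
    exact hmem.2.1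
  have hcA : ({u, v, w} : Finset V).card = 3 := card3 huv (Ne.symm hwu) (Ne.symm hwv)
  -- Step 1 : {u,v,w} ∈ E
  have hA : ({u, v, w} : Finset V) ∈ E := by
    by_contra hA
    obtain ⟨g, hg, h', hh', α, γ, m, heg, heh, -, hαγ, -, -⟩ :=
      extract hfree (hadd _ hcA hA)
    have key : ∀ g₀ ∈ E, ∀ δ : V, ({u, v, w} : Finset V) ∩ g₀ = {δ} → δ = u := by
      intro g₀ hg₀ δ hδ
      have hδm : δ ∈ ({u, v, w} : Finset V) ∩ g₀ := by
        rw [hδ]; exact mem_singleton_self δ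
      obtain ⟨hδe, hδg⟩ := mem_inter.mp hδm
      have single : ∀ x, x ∈ ({u, v, w} : Finset V) → x ∈ g₀ → x = δ := by
        intro x h1 h2
        have : x ∈ ({u, v, w} : Finset V) ∩ g₀ := mem_inter.mpr ⟨h1, h2⟩
        rwa [hδ, mem_singleton] at this
      simp only [mem_insert, mem_singleton] at hδe
      rcases hδe with rfl | rfl | rfl
      · rfl
      · exact absurd (single u (by simp) (hv g₀ hg₀ hδg)).symm (Ne.symm huv)
      · exact absurd (single u (by simp) (hw' g₀ hg₀ hδg)).symm hwu
    exact hαγ ((key g hg α heg).trans (key h' hh' γ heh).symm)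
  -- the second edge at w : C = {u,w,z}
  have hAw : ({u, v, w} : Finset V) ∈ E.filter (fun e => w ∈ e) :=
    mem_filter.mpr ⟨hA, by simp⟩
  obtain ⟨C, hCf, hCA⟩ : ∃ C ∈ E.filter (fun e => w ∈ e), C ≠ {u, v, w} := by
    have h1 : 0 < ((E.filter (fun e => w ∈ e)).erase {u, v, w}).card := by
      rw [card_erase_of_mem hAw, hdw]; norm_num
    obtain ⟨C, hC⟩ := card_pos.mp h1
    exact ⟨C, mem_of_mem_erase hC, ne_of_mem_erase hC⟩
  obtain ⟨hCE, hwC⟩ := mem_filter.mp hCf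
  have huC : u ∈ C := hw' C hCE hwC
  have hvC : v ∉ C := by
    intro hvC
    apply hCA
    have hsub : ({u, v, w} : Finset V) ⊆ C := by
      intro x hx; simp only [mem_insert, mem_singleton] at hx
      rcases hx with rfl | rfl | rfl <;> assumption
    exact (eq_of_subset_of_card_le hsub (by rw [hunif C hCE, hcA])).symm
  obtain ⟨z, hzC, hzu, hzw⟩ : ∃ z ∈ C, z ≠ u ∧ z ≠ w := by
    by_contra hcon
    push_neg at hcon
    have hsub : C ⊆ {u, w} := by
      intro x hx
      simp only [mem_insert, mem_singleton]
      by_cases hxu : x = u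
      · exact Or.inl hxu
      · exact Or.inr (hcon x hx hxu)
    have hle := card_le_card hsub
    have h2 : ({u, w} : Finset V).card ≤ 2 := card_insert_le u {w} |>.trans (by simp)
    rw [hunif C hCE] at hle
    omega
  have hCeq : C = ({u, w, z} : Finset V) := by
    have hsub : ({u, w, z} : Finset V) ⊆ C := by
      intro x hx; simp only [mem_insert, mem_singleton] at hx
      rcases hx with rfl | rfl | rfl <;> assumption
    exact (eq_of_subset_of_card_le hsub
      (by rw [hunif C hCE, card3 (Ne.symm hwu) (Ne.symm hzu) (Ne.symm hzw)])).symm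
  have hzv : z ≠ v := fun hh => hvC (hh ▸ hzC)
  -- the only edges containing w are {u,v,w} and C
  have hwedges : ∀ g ∈ E, w ∈ g → g = {u, v, w} ∨ g = C := by
    intro g hg hwg
    have hsub : ({({u, v, w} : Finset V), C} : Finset (Finset V)) ⊆
        E.filter (fun e => w ∈ e) := by
      intro x hx; simp only [mem_insert, mem_singleton] at hx
      rcases hx with rfl | rfl
      · exact hAw
      · exact hCf
    have hc2 : ({({u, v, w} : Finset V), C} : Finset (Finset V)).card = 2 := by
      rw [card_insert_of_notMem (by simpa using Ne.symm hCA), card_singleton]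
    have heqf := eq_of_subset_of_card_le hsub (by rw [hdw, hc2])
    have hmem : g ∈ ({({u, v, w} : Finset V), C} : Finset (Finset V)) := by
      rw [heqf]; exact mem_filter.mpr ⟨hg, hwg⟩
    simpa using hmem
  by_cases hBz : ({u, v, z} : Finset V) ∈ E
  · -- case {u,v,z} ∈ E : add the non-edge {v,w,z}
    have hAne : ({u, v, w} : Finset V) ≠ ({u, v, z} : Finset V) := by
      intro hh
      have : w ∈ ({u, v, z} : Finset V) := hh ▸ (by simp : w ∈ ({u, v, w} : Finset V))
      simp only [mem_insert, mem_singleton] at this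
      rcases this with h | h | h
      · exact hwu h
      · exact hwv h
      · exact hzw h.symm
    have huvedges : ∀ g ∈ E, u ∈ g → v ∈ g → g = {u, v, w} ∨ g = {u, v, z} := by
      intro g hg hug hvg
      have hsub : ({({u, v, w} : Finset V), ({u, v, z} : Finset V)} : Finset (Finset V)) ⊆
          E.filter (fun e => u ∈ e ∧ v ∈ e) := by
        intro x hx; simp only [mem_insert, mem_singleton] at hx
        rcases hx with rfl | rfl
        · exact mem_filter.mpr ⟨hA, by simp⟩
        · exact mem_filter.mpr ⟨hBz, by simp⟩
      have hc2 : ({({u, v, w} : Finset V), ({u, v, z} : Finset V)} :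
          Finset (Finset V)).card = 2 := by
        rw [card_insert_of_notMem (by simpa using hAne), card_singleton]
      have heqf := eq_of_subset_of_card_le hsub (by rw [hcod, hc2])
      have hmem : g ∈ ({({u, v, w} : Finset V), ({u, v, z} : Finset V)} :
          Finset (Finset V)) := by
        rw [heqf]; exact mem_filter.mpr ⟨hg, hug, hvg⟩
      simpa using hmem
    have hc₀ : ({v, w, z} : Finset V).card = 3 :=
      card3 (Ne.symm hwv) (Ne.symm hzv) (Ne.symm hzw)
    have hne₀ : ({v, w, z} : Finset V) ∉ E := by
      intro hmem
      have hu : u ∈ ({v, w, z} : Finset V) := hv _ hmem (by simp)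
      simp only [mem_insert, mem_singleton] at hu
      rcases hu with h | h | h
      · exact huv h
      · exact hwu h.symm
      · exact hzu h.symm
    obtain ⟨g, hg, h', hh', α, γ, m, heg, heh, -, hαγ, -, -⟩ :=
      extract hfree (hadd _ hc₀ hne₀)
    have key : ∀ g₀ ∈ E, ∀ δ : V, ({v, w, z} : Finset V) ∩ g₀ = {δ} → δ = z := by
      intro g₀ hg₀ δ hδ
      have hδm : δ ∈ ({v, w, z} : Finset V) ∩ g₀ := by
        rw [hδ]; exact mem_singleton_self δ
      obtain ⟨hδe, hδg⟩ := mem_inter.mp hδm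
      have single : ∀ x, x ∈ ({v, w, z} : Finset V) → x ∈ g₀ → x = δ := by
        intro x h1 h2
        have : x ∈ ({v, w, z} : Finset V) ∩ g₀ := mem_inter.mpr ⟨h1, h2⟩
        rwa [hδ, mem_singleton] at this
      simp only [mem_insert, mem_singleton] at hδe
      rcases hδe with rfl | rfl | rfl
      · -- δ = v
        exfalso
        have hug : u ∈ g₀ := hv g₀ hg₀ hδg
        rcases huvedges g₀ hg₀ hug hδg with rfl | rfl
        · exact hwv (single w (by simp) (by simp))
        · exact hzv (single z (by simp) (by simp))
      · -- δ = w
        exfalso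
        rcases hwedges g₀ hg₀ hδg with rfl | rfl
        · exact hwv.symm (single v (by simp) (by simp))
        · exact hzw (single z (by simp) hzC)
      · rfl
    exact hαγ ((key g hg α heg).trans (key h' hh' γ heh).symm)
  · -- case {u,v,z} ∉ E : add it
    have hce : ({u, v, z} : Finset V).card = 3 := card3 huv (Ne.symm hzu) (Ne.symm hzv)
    obtain ⟨g, hg, h', hh', α, γ, m, heg, heh, hgh, hαγ, hαm, hγm⟩ :=
      extract hfree (hadd _ hce hBz)
    have key : ∀ g₀ ∈ E, ∀ δ : V, ({u, v, z} : Finset V) ∩ g₀ = {δ} → δ = u ∨ δ = z := by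
      intro g₀ hg₀ δ hδ
      have hδm : δ ∈ ({u, v, z} : Finset V) ∩ g₀ := by
        rw [hδ]; exact mem_singleton_self δ
      obtain ⟨hδe, hδg⟩ := mem_inter.mp hδm
      have single : ∀ x, x ∈ ({u, v, z} : Finset V) → x ∈ g₀ → x = δ := by
        intro x h1 h2
        have : x ∈ ({u, v, z} : Finset V) ∩ g₀ := mem_inter.mpr ⟨h1, h2⟩
        rwa [hδ, mem_singleton] at this
      simp only [mem_insert, mem_singleton] at hδe
      rcases hδe with rfl | rfl | rfl
      · exact Or.inl rfl
      · exact absurd (single u (by simp) (hv g₀ hg₀ hδg)).symm (Ne.symm huv)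
      · exact Or.inr rfl
    have final : ∀ g₁ ∈ E, ∀ h₁ ∈ E, ∀ m₁ : V,
        ({u, v, z} : Finset V) ∩ g₁ = {u} → ({u, v, z} : Finset V) ∩ h₁ = {z} →
        g₁ ∩ h₁ = {m₁} → m₁ ≠ u → m₁ ≠ z → False := by
      intro g₁ hg₁ h₁ hh₁ m₁ hgu hhz hghm hmu hmz
      have singleg : ∀ x, x ∈ ({u, v, z} : Finset V) → x ∈ g₁ → x = u := by
        intro x h1 h2
        have : x ∈ ({u, v, z} : Finset V) ∩ g₁ := mem_inter.mpr ⟨h1, h2⟩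
        rwa [hgu, mem_singleton] at this
      have singleh : ∀ x, x ∈ ({u, v, z} : Finset V) → x ∈ h₁ → x = z := by
        intro x h1 h2
        have : x ∈ ({u, v, z} : Finset V) ∩ h₁ := mem_inter.mpr ⟨h1, h2⟩
        rwa [hhz, mem_singleton] at this
      have hug : u ∈ g₁ := by
        have : u ∈ ({u, v, z} : Finset V) ∩ g₁ := by rw [hgu]; exact mem_singleton_self u
        exact (mem_inter.mp this).2
      have hzh : z ∈ h₁ := by
        have : z ∈ ({u, v, z} : Finset V) ∩ h₁ := by rw [hhz]; exact mem_singleton_self z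
        exact (mem_inter.mp this).2
      have hvg : v ∉ g₁ := fun hh => huv (singleg v (by simp) hh).symm
      have hzg : z ∉ g₁ := fun hh => hzu (singleg z (by simp) hh)
      have huh : u ∉ h₁ := fun hh => hzu (singleh u (by simp) hh).symm
      have hwh : w ∉ h₁ := fun hh => huh (hw' h₁ hh₁ hh)
      have hwg : w ∉ g₁ := by
        intro hh
        rcases hwedges g₁ hg₁ hh with rfl | rfl
        · exact hvg (by simp)
        · exact hzg hzC
      have hmg : m₁ ∈ g₁ := by
        have : m₁ ∈ g₁ ∩ h₁ := by rw [hghm]; exact mem_singleton_self m₁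
        exact (mem_inter.mp this).1
      apply hfree
      refine ⟨g₁, hg₁, h₁, hh₁, C, hCE, m₁, z, u, hghm, ?_, ?_, hmz, hzu, hmu, ?_⟩
      · -- h₁ ∩ C = {z}
        rw [hCeq]
        apply eq_singleton_iff_unique_mem.mpr
        refine ⟨mem_inter.mpr ⟨hzh, by simp⟩, ?_⟩
        intro x hx
        obtain ⟨hx1, hx2⟩ := mem_inter.mp hx
        rw [inter_comm] at hx
        simp only [mem_insert, mem_singleton] at hx2
        rcases hx2 with rfl | rfl | rfl
        · exact absurd hx1 huh
        · exact absurd hx1 hwh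
        · rfl
      · -- g₁ ∩ C = {u}
        rw [hCeq]
        apply eq_singleton_iff_unique_mem.mpr
        refine ⟨mem_inter.mpr ⟨hug, by simp⟩, ?_⟩
        intro x hx
        obtain ⟨hx1, hx2⟩ := mem_inter.mp hx
        simp only [mem_insert, mem_singleton] at hx2
        rcases hx2 with rfl | rfl | rfl
        · rfl
        · exact absurd hx1 hwg
        · exact absurd hx1 hzg
      · -- triple intersection empty
        rw [hghm]
        refine singleton_inter_of_notMem ?_
        rw [hCeq]
        simp only [mem_insert, mem_singleton]
        push_neg
        exact ⟨hmu, fun hh => hwg (hh ▸ hmg), hmz⟩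
    rcases key g hg α heg with rfl | rfl
    · rcases key h' hh' γ heh with rfl | rfl
      · exact absurd rfl hαγ
      · exact final g hg h' hh' m heg heh hgh (Ne.symm hαm) (Ne.symm hγm)
    · rcases key h' hh' γ heh with rfl | rfl
      · exact final h' hh' g hg m heh heg (by rw [inter_comm]; exact hgh)
          (Ne.symm hγm) (Ne.symm hαm)
      · exact absurd rfl hαγ
end

section
/- Let G be a C_3^{(3)}-saturated 3-uniform hypergraph on n ≥ 5 vertices and let v be a vertex. Then no edge e ∈ E(G) with v ∉ e contains two distinct vertices u_1, u_2 ∈ N(v) with d(u_1) = d(u_2) = 2. -/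
open Finset

variable {V : Type*}

lemma c3_aux {V : Type*} [DecidableEq V] (E : Finset (Finset V)) (hu : IsUniform3 E)
    (hfree : ¬ HasC3 E) (t : Finset V) (ht : t.card = 3)
    (hC : HasC3 (insert t E)) (z : V)
    (hz : ∀ g ∈ E, ∀ y : V, t ∩ g = {y} → y = z) : False := by
  obtain ⟨e₁, he₁, e₂, he₂, e₃, he₃, a, b, c, h12, h23, h13, hab, hbc, hac, _⟩ := hC
  have hcard : ∀ f ∈ insert t E, f.card = 3 := by
    intro f hf
    rcases mem_insert.mp hf with h | h
    · rw [h]; exact ht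
    · exact hu f h
  have hne : ∀ f g : Finset V, f ∈ insert t E → f ∩ g = ({a} : Finset V) ∨
      f ∩ g = ({b} : Finset V) ∨ f ∩ g = ({c} : Finset V) → f ≠ g := by
    intro f g hf hint hfg
    subst hfg
    rw [inter_self] at hint
    have h3 := hcard f hf
    rcases hint with h | h | h <;> rw [h] at h3 <;> simp at h3
  have h12' : e₁ ≠ e₂ := hne e₁ e₂ he₁ (Or.inl h12)
  have h23' : e₂ ≠ e₃ := hne e₂ e₃ he₂ (Or.inr (Or.inl h23))
  have h13' : e₁ ≠ e₃ := hne e₁ e₃ he₁ (Or.inr (Or.inr h13))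
  by_cases h1 : e₁ = t
  · have he₂E : e₂ ∈ E := (mem_insert.mp he₂).resolve_left (fun h => h12' (h1.trans h.symm))
    have he₃E : e₃ ∈ E := (mem_insert.mp he₃).resolve_left (fun h => h13' (h1.trans h.symm))
    have haz := hz e₂ he₂E a (h1 ▸ h12)
    have hcz := hz e₃ he₃E c (h1 ▸ h13)
    exact hac (haz.trans hcz.symm)
  · have he₁E : e₁ ∈ E := (mem_insert.mp he₁).resolve_left h1
    by_cases h2 : e₂ = t
    · have he₃E : e₃ ∈ E := (mem_insert.mp he₃).resolve_left (fun h => h23' (h2.trans h.symm))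
      have haz := hz e₁ he₁E a (by rw [inter_comm]; exact h2 ▸ h12)
      have hbz := hz e₃ he₃E b (h2 ▸ h23)
      exact hab (haz.trans hbz.symm)
    · have he₂E : e₂ ∈ E := (mem_insert.mp he₂).resolve_left h2
      by_cases h3 : e₃ = t
      · have hcz := hz e₁ he₁E c (by rw [inter_comm]; exact h3 ▸ h13)
        have hbz := hz e₂ he₂E b (by rw [inter_comm]; exact h3 ▸ h23)
        exact hbc (hbz.trans hcz.symm)
      · have he₃E : e₃ ∈ E := (mem_insert.mp he₃).resolve_left h3
        exact hfree ⟨e₁, he₁E, e₂, he₂E, e₃, he₃E, a, b, c, h12, h23, h13, hab, hbc, hac, ‹e₁ ∩ e₂ ∩ e₃ = ∅›⟩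

theorem no_two_deg_two_neighbors_in_edge {V : Type*} [Fintype V] [DecidableEq V]
    (E : Finset (Finset V)) (hsat : IsSat3 E) (hcard : 5 ≤ Fintype.card V)
    (v : V) (e : Finset V) (he : e ∈ E) (hve : v ∉ e) :
    ¬ ∃ u₁ u₂ : V, u₁ ≠ u₂ ∧ u₁ ∈ e ∧ u₂ ∈ e ∧
      Adj E v u₁ ∧ Adj E v u₂ ∧ deg E u₁ = 2 ∧ deg E u₂ = 2 := by
  obtain ⟨hu, hfree, hsatur⟩ := hsat
  rintro ⟨u₁, u₂, hne, hu1e, hu2e, ⟨hvu1, f₁, hf₁E, hvf₁, hu1f₁⟩,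
    ⟨hvu2, f₂, hf₂E, hvf₂, hu2f₂⟩, hd1, hd2⟩
  have hef₁ : e ≠ f₁ := fun h => hve (h ▸ hvf₁)
  have hef₂ : e ≠ f₂ := fun h => hve (h ▸ hvf₂)
  have key : ∀ (u : V) (f : Finset V), f ∈ E → u ∈ e → u ∈ f → e ≠ f →
      deg E u = 2 → ∀ g ∈ E, u ∈ g → g = e ∨ g = f := by
    intro u f hfE hue huf hef hd g hg hug
    have hsub : ({e, f} : Finset (Finset V)) ⊆ E.filter (fun s => u ∈ s) := by
      intro x hx
      simp only [mem_insert, mem_singleton] at hx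
      rcases hx with rfl | rfl <;> simp [mem_filter, he, hfE, hue, huf]
    have heq : E.filter (fun s => u ∈ s) = {e, f} := by
      refine (eq_of_subset_of_card_le hsub ?_).symm
      have : (E.filter (fun s => u ∈ s)).card = 2 := hd
      rw [this, card_pair hef]
    have hgm : g ∈ E.filter (fun s => u ∈ s) := mem_filter.mpr ⟨hg, hug⟩
    rw [heq] at hgm
    simpa using hgm
  have key₁ := key u₁ f₁ hf₁E hu1e hu1f₁ hef₁ hd1
  have key₂ := key u₂ f₂ hf₂E hu2e hu2f₂ hef₂ hd2
  by_cases hf : ({u₁, u₂, v} : Finset V) ∈ E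
  · -- Case: {u₁,u₂,v} ∈ E, so f₁ = f₂ = {u₁,u₂,v}; add t = {u₁,u₂,z} for fresh z
    have hvmem : v ∈ ({u₁, u₂, v} : Finset V) := by simp
    have hfe : ({u₁, u₂, v} : Finset V) ≠ e := fun h => hve (h ▸ hvmem)
    have hff₁ : ({u₁, u₂, v} : Finset V) = f₁ :=
      (key₁ _ hf (by simp)).resolve_left hfe
    have hff₂ : ({u₁, u₂, v} : Finset V) = f₂ :=
      (key₂ _ hf (by simp)).resolve_left hfe
    obtain ⟨z, hz⟩ : ∃ z, z ∉ insert v e := by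
      by_contra h
      push_neg at h
      have h1 : (univ : Finset V) ⊆ insert v e := fun x _ => h x
      have h2 := card_le_card h1
      have h3 : (insert v e).card ≤ 4 := by
        calc (insert v e).card ≤ e.card + 1 := card_insert_le _ _
        _ = 4 := by rw [hu e he]
      rw [card_univ] at h2
      omega
    have hze : z ∉ e := fun h => hz (mem_insert_of_mem h)
    have hzv : z ≠ v := fun h => hz (h ▸ mem_insert_self v e)
    have hzu₁ : z ≠ u₁ := fun h => hze (h ▸ hu1e)
    have hzu₂ : z ≠ u₂ := fun h => hze (h ▸ hu2e)
    set t := ({u₁, u₂, z} : Finset V) with htdef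
    have hu1t : u₁ ∈ t := by simp [htdef]
    have hu2t : u₂ ∈ t := by simp [htdef]
    have hzt : z ∈ t := by simp [htdef]
    have htc : t.card = 3 := by
      rw [htdef, card_insert_of_notMem (by simp [hne, Ne.symm hzu₁]),
        card_insert_of_notMem (by simp [Ne.symm hzu₂]), card_singleton]
    have htE : t ∉ E := by
      intro h
      rcases key₁ t h hu1t with h' | h'
      · exact hze (h' ▸ hzt)
      · rw [← hff₁] at h'
        have : z ∈ ({u₁, u₂, v} : Finset V) := h' ▸ hzt
        simp only [mem_insert, mem_singleton] at this
        rcases this with h'' | h'' | h'' <;> [exact hzu₁ h''; exact hzu₂ h''; exact hzv h'']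
    refine c3_aux E hu hfree t htc (hsatur t htc htE) z ?_
    intro g hg y hy
    have hyt : y ∈ t ∩ g := hy ▸ mem_singleton_self y
    have hyg : y ∈ g := (mem_inter.mp hyt).2
    have : y = u₁ ∨ y = u₂ ∨ y = z := by
      have := (mem_inter.mp hyt).1
      simpa [htdef] using this
    rcases this with rfl | rfl | rfl
    · rcases key₁ g hg hyg with h' | h' <;> rw [h'] at hy
      · have : u₂ ∈ t ∩ e := mem_inter.mpr ⟨hu2t, hu2e⟩
        rw [hy] at this
        exact absurd (mem_singleton.mp this).symm hne
      · have hu2f : u₂ ∈ f₁ := hff₁ ▸ (by simp)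
        have : u₂ ∈ t ∩ f₁ := mem_inter.mpr ⟨hu2t, hu2f⟩
        rw [hy] at this
        exact absurd (mem_singleton.mp this).symm hne
    · rcases key₂ g hg hyg with h' | h' <;> rw [h'] at hy
      · have : u₁ ∈ t ∩ e := mem_inter.mpr ⟨hu1t, hu1e⟩
        rw [hy] at this
        exact absurd (mem_singleton.mp this) hne
      · have hu1f : u₁ ∈ f₂ := hff₂ ▸ (by simp)
        have : u₁ ∈ t ∩ f₂ := mem_inter.mpr ⟨hu1t, hu1f⟩
        rw [hy] at this
        exact absurd (mem_singleton.mp this) hne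
    · rfl
  · -- Case: {u₁,u₂,v} ∉ E; add t = {u₁,u₂,v}
    set t := ({u₁, u₂, v} : Finset V) with htdef
    have hu1t : u₁ ∈ t := by simp [htdef]
    have hu2t : u₂ ∈ t := by simp [htdef]
    have hvt : v ∈ t := by simp [htdef]
    have htc : t.card = 3 := by
      rw [htdef, card_insert_of_notMem (by simp [hne, Ne.symm hvu1]),
        card_insert_of_notMem (by simp [Ne.symm hvu2]), card_singleton]
    refine c3_aux E hu hfree t htc (hsatur t htc hf) v ?_
    intro g hg y hy
    have hyt : y ∈ t ∩ g := hy ▸ mem_singleton_self y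
    have hyg : y ∈ g := (mem_inter.mp hyt).2
    have : y = u₁ ∨ y = u₂ ∨ y = v := by
      have := (mem_inter.mp hyt).1
      simpa [htdef] using this
    rcases this with rfl | rfl | rfl
    · rcases key₁ g hg hyg with h' | h' <;> rw [h'] at hy
      · have : u₂ ∈ t ∩ e := mem_inter.mpr ⟨hu2t, hu2e⟩
        rw [hy] at this
        exact absurd (mem_singleton.mp this).symm hne
      · have : v ∈ t ∩ f₁ := mem_inter.mpr ⟨hvt, hvf₁⟩
        rw [hy] at this
        exact absurd (mem_singleton.mp this) hvu1
    · rcases key₂ g hg hyg with h' | h' <;> rw [h'] at hy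
      · have : u₁ ∈ t ∩ e := mem_inter.mpr ⟨hu1t, hu1e⟩
        rw [hy] at this
        exact absurd (mem_singleton.mp this) hne
      · have : v ∈ t ∩ f₂ := mem_inter.mpr ⟨hvt, hvf₂⟩
        rw [hy] at this
        exact absurd (mem_singleton.mp this) hvu2
    · rfl
end

section
/- Let G be a C_3^{(3)}-saturated 3-uniform hypergraph. If {a,b,c} ∈ E(G) and ab is a good pair (i.e., there exists an a,b-link in G), then c is a double neighbor of a or of b; that is, d(ac) ≥ 2 or d(bc) ≥ 2. -/
open Finset

variable {V : Type*}

theorem good_pair_double_neighbor {V : Type*} [DecidableEq V]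
    (E : Finset (Finset V)) (hsat : IsSat3 E) (a b c : V)
    (he : ({a, b, c} : Finset V) ∈ E) (hgood : GoodPair E a b) :
    2 ≤ codeg E a c ∨ 2 ≤ codeg E b c := by

  obtain ⟨e₁, e₂, h1, h2, ha1, hb2, ha2, hb1, w, hw, hinter⟩ := hgood
  simp only [Finset.mem_insert, Finset.mem_singleton, not_or] at hw
  obtain ⟨hwa, hwb⟩ := hw
  have hab : a ≠ b := fun h => hb1 (h ▸ ha1)
  by_cases hc1 : c ∈ e₁
  · left
    have hne : ({a, b, c} : Finset V) ≠ e₁ := fun h => hb1 (h ▸ by simp)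
    refine Finset.one_lt_card_iff.2 ⟨{a, b, c}, e₁, ?_, ?_, hne⟩ <;>
      simp [Finset.mem_filter, he, h1, ha1, hc1]
  by_cases hc2 : c ∈ e₂
  · right
    have hne : ({a, b, c} : Finset V) ≠ e₂ := fun h => ha2 (h ▸ by simp)
    refine Finset.one_lt_card_iff.2 ⟨{a, b, c}, e₂, ?_, ?_, hne⟩ <;>
      simp [Finset.mem_filter, he, h2, hb2, hc2]
  exfalso
  apply hsat.2.1
  refine ⟨e₁, h1, {a, b, c}, he, e₂, h2, a, b, w, ?_, ?_, hinter, hab, hwb ∘ Eq.symm,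
    fun h => hwa h.symm, ?_⟩
  · ext x
    simp only [Finset.mem_inter, Finset.mem_insert, Finset.mem_singleton]
    constructor
    · rintro ⟨hx, rfl | rfl | rfl⟩
      · rfl
      · exact absurd hx hb1
      · exact absurd hx hc1
    · rintro rfl; exact ⟨ha1, Or.inl rfl⟩
  · ext x
    simp only [Finset.mem_inter, Finset.mem_insert, Finset.mem_singleton]
    constructor
    · rintro ⟨rfl | rfl | rfl, hx⟩
      · exact absurd hx ha2
      · rfl
      · exact absurd hx hc2
    · rintro rfl; exact ⟨Or.inr (Or.inl rfl), hb2⟩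
  · have : e₁ ∩ ({a, b, c} : Finset V) ∩ e₂ ⊆ {w} ∩ ({a, b, c} : Finset V) := by
      rw [← hinter]
      intro x hx
      simp only [Finset.mem_inter] at hx ⊢
      exact ⟨⟨hx.1.1, hx.2⟩, hx.1.2⟩
    refine Finset.eq_empty_of_forall_notMem fun x hx => ?_
    have := this hx
    simp only [Finset.mem_inter, Finset.mem_singleton, Finset.mem_insert] at this
    obtain ⟨rfl, h⟩ := this
    rcases h with rfl | rfl | rfl
    · exact hwa rfl
    · exact hwb rfl
    · have hx2 : x ∈ e₁ ∩ e₂ := by rw [hinter]; exact Finset.mem_singleton_self x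
      exact hc1 (Finset.mem_inter.1 hx2).1
end

section
/- Let (ℓ_n) be a sequence of positive integers with ℓ_n → ∞ and ℓ_n^3/n → 0. Then there exists n_0 such that for every n ≥ n_0 the following holds: if G is a C_3^{(3)}-saturated 3-uniform hypergraph on n vertices with |E(G)| ≤ 2n, H = {v ∈ V(G) : d(v) ≥ n/ℓ_n^2}, Q is the set of vertices having at least two neighbors in H, and S = V(G) \ (Q ∪ H), then there exist two vertices x, y ∈ V(G) with x ∈ H such that |S \ N({x,y})| ≤ 20n/ℓ_n. -/
open Finset

variable {V : Type*}

section helpers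
variable [DecidableEq V]

def Nf (E : Finset (Finset V)) (v : V) : Finset V :=
  (E.filter fun e => v ∈ e).biUnion fun e => e.erase v

lemma mem_Nf {E : Finset (Finset V)} {v u : V} :
    u ∈ Nf E v ↔ u ≠ v ∧ ∃ e ∈ E, v ∈ e ∧ u ∈ e := by
  simp only [Nf, Finset.mem_biUnion, Finset.mem_filter, Finset.mem_erase]
  tauto

lemma adj_iff_mem_Nf {E : Finset (Finset V)} {v u : V} :
    Adj E v u ↔ u ∈ Nf E v := by
  rw [mem_Nf, Adj]
  constructor
  · rintro ⟨h, e, he, hv, hu⟩; exact ⟨h.symm, e, he, hv, hu⟩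
  · rintro ⟨h, e, he, hv, hu⟩; exact ⟨h.symm, e, he, hv, hu⟩

lemma Nf_card_le {E : Finset (Finset V)} (h3 : IsUniform3 E) (v : V) :
    (Nf E v).card ≤ 2 * deg E v := by
  refine (Finset.card_biUnion_le).trans ?_
  rw [deg, Finset.card_eq_sum_ones (E.filter fun e => v ∈ e), Finset.mul_sum]
  refine Finset.sum_le_sum ?_
  intro e he
  rw [Finset.mem_filter] at he
  rw [Finset.card_erase_of_mem he.2, h3 e he.1]
  norm_num

lemma sum_deg [Fintype V] {E : Finset (Finset V)} (h3 : IsUniform3 E) :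
    ∑ v, deg E v = 3 * E.card := by
  unfold deg
  calc ∑ v, (E.filter fun e => v ∈ e).card
      = ∑ v, ∑ e ∈ E, if v ∈ e then 1 else 0 := by
        refine Finset.sum_congr rfl fun v _ => ?_
        rw [Finset.card_filter]
    _ = ∑ e ∈ E, ∑ v, if v ∈ e then 1 else 0 := Finset.sum_comm
    _ = ∑ e ∈ E, e.card := by
        refine Finset.sum_congr rfl fun e _ => ?_
        rw [Finset.sum_ite_mem, Finset.univ_inter, Finset.card_eq_sum_ones]
    _ = 3 * E.card := by
        rw [Finset.sum_congr rfl fun e he => h3 e he, Finset.sum_const, smul_eq_mul,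
          mul_comm]

lemma gp_symm {E : Finset (Finset V)} {a b : V} (h : GoodPair E a b) : GoodPair E b a := by
  obtain ⟨f, g, hf, hg, ha, hb, hag, hbf, w, hw, hfg⟩ := h
  refine ⟨g, f, hg, hf, hb, ha, hbf, hag, w, ?_, by rw [Finset.inter_comm]; exact hfg⟩
  simp only [Finset.mem_insert, Finset.mem_singleton] at hw ⊢
  tauto

lemma goodpair_mid {E : Finset (Finset V)} {a b : V} (h : GoodPair E a b) :
    ∃ m, m ∈ Nf E a ∧ b ∈ Nf E m ∧ a ∈ Nf E m := by
  obtain ⟨f, g, hf, hg, ha, hb, hag, hbf, w, hw, hfg⟩ := h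
  simp only [Finset.mem_insert, Finset.mem_singleton] at hw
  push_neg at hw
  have hwf : w ∈ f := by
    have : w ∈ f ∩ g := hfg ▸ Finset.mem_singleton_self w
    exact (Finset.mem_inter.1 this).1
  have hwg : w ∈ g := by
    have : w ∈ f ∩ g := hfg ▸ Finset.mem_singleton_self w
    exact (Finset.mem_inter.1 this).2
  exact ⟨w, mem_Nf.2 ⟨fun hc => hw.1 hc, f, hf, ha, hwf⟩,
    mem_Nf.2 ⟨fun hc => hw.2 hc.symm, g, hg, hwg, hb⟩,
    mem_Nf.2 ⟨fun hc => hw.1 hc.symm, f, hf, hwf, ha⟩⟩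

lemma link_of_inters {E : Finset (Finset V)} {e f g : Finset V} (hf : f ∈ E) (hg : g ∈ E)
    {α β μ : V} (hef : e ∩ f = {α}) (heg : e ∩ g = {β}) (hfg : f ∩ g = {μ})
    (hαβ : α ≠ β) (hμα : μ ≠ α) (hμβ : μ ≠ β) : GoodPair E α β := by
  have hαe : α ∈ e := (Finset.mem_inter.1 (hef ▸ Finset.mem_singleton_self α)).1
  have hαf : α ∈ f := (Finset.mem_inter.1 (hef ▸ Finset.mem_singleton_self α)).2
  have hβe : β ∈ e := (Finset.mem_inter.1 (heg ▸ Finset.mem_singleton_self β)).1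
  have hβg : β ∈ g := (Finset.mem_inter.1 (heg ▸ Finset.mem_singleton_self β)).2
  have hαg : α ∉ g := fun hc => hαβ (by
    have : α ∈ e ∩ g := Finset.mem_inter.2 ⟨hαe, hc⟩
    rw [heg, Finset.mem_singleton] at this; exact this)
  have hβf : β ∉ f := fun hc => hαβ (by
    have : β ∈ e ∩ f := Finset.mem_inter.2 ⟨hβe, hc⟩
    rw [hef, Finset.mem_singleton] at this; exact this.symm)
  exact ⟨f, g, hf, hg, hαf, hβg, hαg, hβf, μ, by simp [hμα, hμβ], hfg⟩

end helpers

section sat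
variable [DecidableEq V]

lemma resolve3 {E : Finset (Finset V)} {u v w α β : V}
    (hα : α = u ∨ α = v ∨ α = w) (hβ : β = u ∨ β = v ∨ β = w)
    (hαβ : α ≠ β) (hgp : GoodPair E α β) :
    GoodPair E u v ∨ GoodPair E u w ∨ GoodPair E v w := by
  rcases hα with rfl | rfl | rfl <;> rcases hβ with rfl | rfl | rfl <;>
    first
      | exact absurd rfl hαβ
      | exact Or.inl hgp
      | exact Or.inl (gp_symm hgp)
      | exact Or.inr (Or.inl hgp)
      | exact Or.inr (Or.inl (gp_symm hgp))
      | exact Or.inr (Or.inr hgp)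
      | exact Or.inr (Or.inr (gp_symm hgp))

lemma sat_cases {E : Finset (Finset V)} (hs : IsSat3 E) {u v w : V}
    (huv : u ≠ v) (huw : u ≠ w) (hvw : v ≠ w) (hne : ¬ Adj E u v) :
    GoodPair E u v ∨ GoodPair E u w ∨ GoodPair E v w := by
  classical
  set e : Finset V := {u, v, w} with he_def
  have hecard : e.card = 3 := Finset.card_eq_three.2 ⟨u, v, w, huv, huw, hvw, rfl⟩
  have heE : e ∉ E := by
    intro hc
    exact hne ⟨huv, e, hc, by simp [he_def], by simp [he_def]⟩
  have hC3 := hs.2.2 e hecard heE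
  obtain ⟨e₁, h₁, e₂, h₂, e₃, h₃, a, b, c, h12, h23, h13, hab, hbc, hac, -⟩ := hC3
  rw [Finset.mem_insert] at h₁ h₂ h₃
  -- helper: a pair of edges can't both be `e`
  have key : ∀ {f g : Finset V} {x : V}, f ∩ g = {x} → f = e → g = e → False := by
    intro f g x hfg hf hg
    rw [hf, hg, Finset.inter_self] at hfg
    rw [hfg] at hecard
    simp at hecard
  have memuvw : ∀ {x : V} {f : Finset V}, e ∩ f = {x} → x = u ∨ x = v ∨ x = w := by
    intro x f hxf
    have : x ∈ e ∩ f := hxf ▸ Finset.mem_singleton_self x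
    have := (Finset.mem_inter.1 this).1
    simpa [he_def] using this
  rcases h₁ with rfl | h₁
  · -- e₁ = e
    have h₂E : e₂ ∈ E := h₂.resolve_left fun hc => (key h12 rfl hc).elim
    have h₃E : e₃ ∈ E := h₃.resolve_left fun hc => (key h13 rfl hc).elim
    exact resolve3 (memuvw h12) (memuvw h13) hac
      (link_of_inters h₂E h₃E h12 h13 h23 hac hab.symm hbc)
  rcases h₂ with heq | h₂
  · subst heq
    have h₃E : e₃ ∈ E := h₃.resolve_left fun hc => (key h23 rfl hc).elim
    have h12' : e ∩ e₁ = {a} := by rw [Finset.inter_comm]; exact h12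
    exact resolve3 (memuvw h12') (memuvw h23) hab
      (link_of_inters h₁ h₃E h12' h23 h13 hab (fun hc=>hac hc.symm) hbc.symm)
  rcases h₃ with heq | h₃
  · subst heq
    have h13' : e ∩ e₁ = {c} := by rw [Finset.inter_comm]; exact h13
    have h23' : e ∩ e₂ = {b} := by rw [Finset.inter_comm]; exact h23
    exact resolve3 (memuvw h13') (memuvw h23') (fun hc=>hbc hc.symm)
      (link_of_inters h₁ h₂ h13' h23' h12 (fun hc=>hbc hc.symm) hac hab)
  · exact absurd ⟨e₁, h₁, e₂, h₂, e₃, h₃, a, b, c, h12, h23, h13, hab, hbc, hac, by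
      ext x; simp only [Finset.mem_inter, Finset.notMem_empty, iff_false]
      rintro ⟨⟨hx1, hx2⟩, hx3⟩
      have : x = a := by
        have : x ∈ e₁ ∩ e₂ := Finset.mem_inter.2 ⟨hx1, hx2⟩
        rw [h12, Finset.mem_singleton] at this; exact this
      subst this
      have : x = c := by
        have : x ∈ e₁ ∩ e₃ := Finset.mem_inter.2 ⟨hx1, hx3⟩
        rw [h13, Finset.mem_singleton] at this; exact this
      exact hac this⟩ hs.2.1

end sat

section main
variable [DecidableEq V]

lemma adj_symm {E : Finset (Finset V)} {a b : V} (h : Adj E a b) : Adj E b a := by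
  obtain ⟨hne, e, he, ha, hb⟩ := h
  exact ⟨hne.symm, e, he, hb, ha⟩

lemma sum_Nf_card_le [Fintype V] {E : Finset (Finset V)} (h3 : IsUniform3 E) :
    ∑ m, (Nf E m).card ≤ 6 * E.card := by
  calc ∑ m, (Nf E m).card ≤ ∑ m, 2 * deg E m :=
        Finset.sum_le_sum fun m _ => Nf_card_le h3 m
    _ = 2 * ∑ m, deg E m := by rw [Finset.mul_sum]
    _ = 6 * E.card := by rw [sum_deg h3]; ring

end main

set_option maxHeartbeats 2000000 in
lemma main_core {n : ℕ} (L : ℕ) (hL : 100 ≤ L) (hn : 1000 * L ^ 3 ≤ n)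
    (E : Finset (Finset (Fin n))) (hsat : IsSat3 E) (hE : E.card ≤ 2 * n)
    (H Q S : Set (Fin n))
    (hH : H = {v : Fin n | (n : ℝ) / (L : ℝ) ^ 2 ≤ (deg E v : ℝ)})
    (hQ : Q = {v : Fin n | ∃ u₁ ∈ H, ∃ u₂ ∈ H, u₁ ≠ u₂ ∧ Adj E v u₁ ∧ Adj E v u₂})
    (hS : S = Set.univ \ (Q ∪ H)) :
    ∃ x y : Fin n, x ∈ H ∧
      (((S \ {u : Fin n | u ∉ ({x, y} : Set (Fin n)) ∧
          ∃ e ∈ E, u ∈ e ∧ (x ∈ e ∨ y ∈ e)}).ncard : ℝ) ≤ 20 * n / (L : ℝ)) := by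
  classical
  -- numeric facts
  have hL1 : (1:ℝ) ≤ (L:ℝ) := by exact_mod_cast Nat.one_le_iff_ne_zero.2 (by omega)
  have hL0 : (0:ℝ) < (L:ℝ) := by linarith
  have hL100 : (100:ℝ) ≤ (L:ℝ) := by exact_mod_cast hL
  have hnL : 1000 * (L:ℝ)^3 ≤ (n:ℝ) := by exact_mod_cast hn
  have hn0 : (0:ℝ) < (n:ℝ) := by nlinarith [pow_pos hL0 3]
  have hq1 : 1000 * (L:ℝ)^2 ≤ (n:ℝ) / (L:ℝ) := by
    rw [le_div_iff₀ hL0]; nlinarith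
  have hq2 : 1000 * (L:ℝ) ≤ (n:ℝ) / (L:ℝ)^2 := by
    rw [le_div_iff₀ (by positivity)]; nlinarith
  -- finset versions of H and S
  set Hf : Finset (Fin n) := univ.filter (fun v => (n : ℝ) / (L : ℝ) ^ 2 ≤ (deg E v : ℝ))
    with hHf_def
  have memHf : ∀ v, v ∈ Hf ↔ v ∈ H := by
    intro v; simp [hHf_def, hH, Finset.mem_filter]
  set Sf : Finset (Fin n) := univ.filter (fun v => v ∈ S) with hSf_def
  have memSf : ∀ v, v ∈ Sf ↔ v ∈ S := by
    intro v; simp [hSf_def]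
  have hSnotQ : ∀ v ∈ Sf, v ∉ Q ∧ v ∉ H := by
    intro v hv
    rw [memSf, hS] at hv
    constructor
    · exact fun hc => hv.2 (Or.inl hc)
    · exact fun hc => hv.2 (Or.inr hc)
  -- each vertex of S has at most one neighbour in H
  have hNfH : ∀ v ∈ Sf, (Nf E v ∩ Hf).card ≤ 1 := by
    intro v hv
    rw [Finset.card_le_one]
    intro a ha b hb
    by_contra hab
    rcases Finset.mem_inter.1 ha with ⟨ha1, ha2⟩
    rcases Finset.mem_inter.1 hb with ⟨hb1, hb2⟩
    refine (hSnotQ v hv).1 ?_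
    rw [hQ]
    exact ⟨a, (memHf a).1 ha2, b, (memHf b).1 hb2, hab,
      adj_iff_mem_Nf.2 ha1, adj_iff_mem_Nf.2 hb1⟩
  have degNonH : ∀ m, m ∉ Hf → ((Nf E m).card : ℝ) ≤ 2 * ((n:ℝ) / (L:ℝ)^2) := by
    intro m hm
    have h1 : ¬ ((n : ℝ) / (L : ℝ) ^ 2 ≤ (deg E m : ℝ)) := by
      simpa [hHf_def] using hm
    have h2 : ((Nf E m).card : ℝ) ≤ 2 * (deg E m : ℝ) := by
      exact_mod_cast Nf_card_le hsat.1 m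
    push_neg at h1
    linarith
  have hsumNf : (∑ m, ((Nf E m).card : ℝ)) ≤ 12 * (n:ℝ) := by
    have h1 : ∑ m, (Nf E m).card ≤ 6 * E.card := sum_Nf_card_le hsat.1
    have h2 : (6:ℕ) * E.card ≤ 12 * n := by omega
    have := h1.trans h2
    calc (∑ m, ((Nf E m).card : ℝ)) = ((∑ m, (Nf E m).card : ℕ) : ℝ) := by push_cast; ring
      _ ≤ ((12 * n : ℕ) : ℝ) := by exact_mod_cast this
      _ = 12 * (n:ℝ) := by push_cast; ring
  -- if H is empty then S is everything
  have hSf_univ : Hf = ∅ → Sf = Finset.univ := by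
    intro hHfe
    ext v
    simp only [Finset.mem_univ, iff_true]
    rw [memSf, hS]
    refine ⟨Set.mem_univ v, ?_⟩
    rintro (hv | hv)
    · rw [hQ] at hv
      obtain ⟨u₁, hu₁, -⟩ := hv
      exact absurd ((memHf u₁).2 hu₁) (by simp [hHfe])
    · exact absurd ((memHf v).2 hv) (by simp [hHfe])
  -- wrapper producing the final statement
  have wrap : ∀ x y : Fin n, x ∈ H → ∀ T : Finset (Fin n),
      (∀ z : Fin n, z ∈ S → z ∉ {u : Fin n | u ∉ ({x, y} : Set (Fin n)) ∧
          ∃ e ∈ E, u ∈ e ∧ (x ∈ e ∨ y ∈ e)} → z ∈ T) →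
      (T.card : ℝ) ≤ 20 * (n:ℝ) / (L:ℝ) →
      ∃ x y : Fin n, x ∈ H ∧
        (((S \ {u : Fin n | u ∉ ({x, y} : Set (Fin n)) ∧
            ∃ e ∈ E, u ∈ e ∧ (x ∈ e ∨ y ∈ e)}).ncard : ℝ) ≤ 20 * n / (L : ℝ)) := by
    intro x y hx T hsub hT
    refine ⟨x, y, hx, ?_⟩
    have h1 : (S \ {u : Fin n | u ∉ ({x, y} : Set (Fin n)) ∧
        ∃ e ∈ E, u ∈ e ∧ (x ∈ e ∨ y ∈ e)}) ⊆ (T : Set (Fin n)) := by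
      rintro z ⟨hz1, hz2⟩
      exact hsub z hz1 hz2
    have h2 := Set.ncard_le_ncard h1 (Set.toFinite _)
    rw [Set.ncard_coe_finset] at h2
    exact le_trans (by exact_mod_cast h2) hT
  -- z not in the neighbourhood set and not x,y means non-adjacent to both
  have notNN : ∀ x y z : Fin n,
      z ∉ {u : Fin n | u ∉ ({x, y} : Set (Fin n)) ∧
          ∃ e ∈ E, u ∈ e ∧ (x ∈ e ∨ y ∈ e)} →
      z = x ∨ z = y ∨ (z ∉ Nf E x ∧ z ∉ Nf E y) := by
    intro x y z hz
    by_cases h1 : z = x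
    · exact Or.inl h1
    by_cases h2 : z = y
    · exact Or.inr (Or.inl h2)
    refine Or.inr (Or.inr ⟨fun hc => ?_, fun hc => ?_⟩)
    · obtain ⟨-, e, he, hxe, hze⟩ := mem_Nf.1 hc
      exact hz ⟨by simp [h1, h2], e, he, hze, Or.inl hxe⟩
    · obtain ⟨-, e, he, hye, hze⟩ := mem_Nf.1 hc
      exact hz ⟨by simp [h1, h2], e, he, hze, Or.inr hye⟩
  
  -- trivial case: S is small
  by_cases hSsmall : (Sf.card : ℝ) ≤ 19 * (n:ℝ) / (L:ℝ)
  · have hHfne : Hf.Nonempty := by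
      rw [Finset.nonempty_iff_ne_empty]
      intro hHfe
      have h1 := hSf_univ hHfe
      have h2 : (Sf.card : ℝ) = (n:ℝ) := by
        rw [h1, Finset.card_univ, Fintype.card_fin]
      rw [h2] at hSsmall
      have h3 : (n:ℝ) * (L:ℝ) ≤ 19 * n := by
        have := (le_div_iff₀ hL0).1 hSsmall
        linarith
      nlinarith
    obtain ⟨x, hx⟩ := hHfne
    refine wrap x x ((memHf x).1 hx) Sf (fun z hz _ => (memSf z).2 hz) ?_
    have h4 : (0:ℝ) ≤ (n:ℝ)/(L:ℝ) := by positivity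
    have h5 : 20 * (n:ℝ)/(L:ℝ) - 19 * (n:ℝ)/(L:ℝ) = (n:ℝ)/(L:ℝ) := by ring
    linarith
  push_neg at hSsmall
  -- big case
  set S₀ : Finset (Fin n) := Sf.filter (fun v => deg E v ≤ L) with hS₀_def
  set S₁ : Finset (Fin n) := Sf.filter (fun v => ¬ deg E v ≤ L) with hS₁_def
  have hpart : S₀.card + S₁.card = Sf.card :=
    Finset.card_filter_add_card_filter_not _
  have hS₁c : ((S₁.card:ℝ)) ≤ 6*(n:ℝ)/(L:ℝ) := by
    have h1 : S₁.card • L ≤ ∑ v ∈ S₁, deg E v := by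
      refine Finset.card_nsmul_le_sum _ _ _ ?_
      intro v hv
      have := (Finset.mem_filter.1 hv).2
      omega
    have h2 : ∑ v ∈ S₁, deg E v ≤ ∑ v, deg E v := by
      refine Finset.sum_le_sum_of_subset (Finset.subset_univ _)
    have h3 : ∑ v, deg E v ≤ 6 * n := by
      rw [sum_deg hsat.1]; omega
    have h4 : S₁.card * L ≤ 6 * n := by
      rw [← smul_eq_mul]; omega
    have h5 : (S₁.card : ℝ) * (L:ℝ) ≤ 6 * (n:ℝ) := by exact_mod_cast h4
    rw [le_div_iff₀ hL0]
    linarith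
  have hs13 : 13*(n:ℝ)/(L:ℝ) ≤ (S₀.card:ℝ) := by
    have h1 : (S₀.card:ℝ) + (S₁.card:ℝ) = (Sf.card:ℝ) := by exact_mod_cast hpart
    have h2 : 19*(n:ℝ)/(L:ℝ) - 6*(n:ℝ)/(L:ℝ) = 13*(n:ℝ)/(L:ℝ) := by ring
    linarith
  have hS₀Sf : ∀ v ∈ S₀, v ∈ Sf := fun v hv => (Finset.mem_filter.1 hv).1
  by_cases hbad : ∃ u ∈ S₀, ∃ v ∈ S₀, u ≠ v ∧ ¬ Adj E u v ∧ ¬ GoodPair E u v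
  · -- CASE A: a bad pair exists
    obtain ⟨u, hu, v, hv, huv, hnadj, hngp⟩ := hbad
    have huS : u ∈ Sf := hS₀Sf u hu
    have hvS : v ∈ Sf := hS₀Sf v hv
    have hud : deg E u ≤ L := (Finset.mem_filter.1 hu).2
    have hvd : deg E v ≤ L := (Finset.mem_filter.1 hv).2
    set base : Finset (Fin n) := (Nf E u ∪ Nf E v) \ Hf with hbase_def
    set T : Finset (Fin n) := base.biUnion (fun m => Nf E m) with hT_def
    set K : Finset (Fin n) := (Nf E u ∪ Nf E v) ∩ Hf with hK_def
    have hKsubH : K ⊆ Hf := Finset.inter_subset_right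
    have hcover : ∀ w, w ∈ Sf → w ≠ u → w ≠ v → w ∈ T ∨ ∃ m ∈ K, w ∈ Nf E m := by
      intro w hw hwu hwv
      rcases sat_cases hsat huv (fun h => hwu h.symm) (fun h => hwv h.symm) hnadj
        with h | h | h
      · exact absurd h hngp
      · obtain ⟨m, hm1, hm2, -⟩ := goodpair_mid h
        by_cases hmH : m ∈ Hf
        · exact Or.inr ⟨m, Finset.mem_inter.2 ⟨Finset.mem_union_left _ hm1, hmH⟩, hm2⟩
        · exact Or.inl (Finset.mem_biUnion.2
            ⟨m, Finset.mem_sdiff.2 ⟨Finset.mem_union_left _ hm1, hmH⟩, hm2⟩)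
      · obtain ⟨m, hm1, hm2, -⟩ := goodpair_mid h
        by_cases hmH : m ∈ Hf
        · exact Or.inr ⟨m, Finset.mem_inter.2 ⟨Finset.mem_union_right _ hm1, hmH⟩, hm2⟩
        · exact Or.inl (Finset.mem_biUnion.2
            ⟨m, Finset.mem_sdiff.2 ⟨Finset.mem_union_right _ hm1, hmH⟩, hm2⟩)
    have hbasecard : base.card ≤ 4 * L := by
      have h1 : base.card ≤ (Nf E u).card + (Nf E v).card :=
        (Finset.card_le_card Finset.sdiff_subset).trans (Finset.card_union_le _ _)
      have h2 : (Nf E u).card ≤ 2 * L := (Nf_card_le hsat.1 u).trans (by omega)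
      have h3 : (Nf E v).card ≤ 2 * L := (Nf_card_le hsat.1 v).trans (by omega)
      omega
    have hTcard : (T.card : ℝ) ≤ 8 * (n:ℝ) / (L:ℝ) := by
      have h1 : T.card ≤ ∑ m ∈ base, (Nf E m).card := Finset.card_biUnion_le
      have h2 : (∑ m ∈ base, ((Nf E m).card : ℝ)) ≤
          (base.card : ℝ) * (2 * ((n:ℝ)/(L:ℝ)^2)) := by
        calc (∑ m ∈ base, ((Nf E m).card:ℝ))
            ≤ ∑ m ∈ base, 2*((n:ℝ)/(L:ℝ)^2) :=
              Finset.sum_le_sum (fun m hm => degNonH m (Finset.mem_sdiff.1 hm).2)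
          _ = (base.card : ℝ) * (2 * ((n:ℝ)/(L:ℝ)^2)) := by
              rw [Finset.sum_const, nsmul_eq_mul]
      have h3 : (T.card:ℝ) ≤ ∑ m ∈ base, ((Nf E m).card : ℝ) := by
        calc (T.card:ℝ) ≤ ((∑ m ∈ base, (Nf E m).card : ℕ) : ℝ) := by exact_mod_cast h1
          _ = ∑ m ∈ base, ((Nf E m).card : ℝ) := by push_cast; ring
      have h4 : (base.card : ℝ) ≤ 4 * (L:ℝ) := by exact_mod_cast hbasecard
      have h5 : (0:ℝ) ≤ 2 * ((n:ℝ)/(L:ℝ)^2) := by positivity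
      have h6 : (4 * (L:ℝ)) * (2 * ((n:ℝ)/(L:ℝ)^2)) = 8 * (n:ℝ)/(L:ℝ) := by
        field_simp
        ring
      nlinarith [mul_le_mul_of_nonneg_right h4 h5]
    have hxy : ∃ x y : Fin n, x ∈ Hf ∧ ∀ m ∈ K, m = x ∨ m = y := by
      by_cases hKne : K.Nonempty
      · obtain ⟨x, hx⟩ := hKne
        by_cases hK'ne : (K.erase x).Nonempty
        · obtain ⟨y, hy⟩ := hK'ne
          refine ⟨x, y, hKsubH hx, fun m hm => ?_⟩
          by_cases hmx : m = x
          · exact Or.inl hmx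
          · refine Or.inr ?_
            have hm' : m ∈ K.erase x := Finset.mem_erase.2 ⟨hmx, hm⟩
            have hKc : K.card ≤ 2 := by
              have h1 : K ⊆ (Nf E u ∩ Hf) ∪ (Nf E v ∩ Hf) := by
                rw [hK_def, Finset.union_inter_distrib_right]
              have h2 := (Finset.card_le_card h1).trans (Finset.card_union_le _ _)
              have h3 := hNfH u huS
              have h4 := hNfH v hvS
              omega
            have hcard : (K.erase x).card ≤ 1 := by
              have := Finset.card_erase_of_mem hx
              omega
            exact Finset.card_le_one.1 hcard m hm' y hy
        · refine ⟨x, x, hKsubH hx, fun m hm => Or.inl ?_⟩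
          by_contra hmx
          exact hK'ne ⟨m, Finset.mem_erase.2 ⟨hmx, hm⟩⟩
      · have hHfne : Hf.Nonempty := by
          rw [Finset.nonempty_iff_ne_empty]
          intro hHfe
          have hSfu := hSf_univ hHfe
          have hsub : (Finset.univ : Finset (Fin n)) ⊆ insert u (insert v T) := by
            intro w _
            by_cases hwu : w = u
            · simp [hwu]
            by_cases hwv : w = v
            · simp [hwv]
            rcases hcover w (by rw [hSfu]; exact Finset.mem_univ w) hwu hwv
              with h | ⟨m, hm, -⟩
            · simp [Finset.mem_insert, h]
            · exact absurd ⟨m, hm⟩ hKne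
          have h1 : n ≤ T.card + 2 := by
            have h2 := Finset.card_le_card hsub
            rw [Finset.card_univ, Fintype.card_fin] at h2
            have h3 := Finset.card_insert_le v T
            have h4 := Finset.card_insert_le u (insert v T)
            omega
          have h5 : (n:ℝ) ≤ (T.card:ℝ) + 2 := by exact_mod_cast h1
          have h6 : (n:ℝ) ≤ 8*(n:ℝ)/(L:ℝ) + 2 := by linarith
          have h7 : (n:ℝ) * (L:ℝ) ≤ 8*(n:ℝ) + 2*(L:ℝ) := by
            have h8 : (8*(n:ℝ)/(L:ℝ)) * (L:ℝ) = 8*(n:ℝ) := by field_simp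
            nlinarith
          nlinarith
        obtain ⟨x, hx⟩ := hHfne
        exact ⟨x, x, hx, fun m hm => absurd ⟨m, hm⟩ hKne⟩
    obtain ⟨x, y, hxH, hKxy⟩ := hxy
    refine wrap x y ((memHf x).1 hxH) (insert u (insert v (insert x (insert y T)))) ?_ ?_
    · intro z hzS hzNN
      have hzSf : z ∈ Sf := (memSf z).2 hzS
      rcases notNN x y z hzNN with rfl | rfl | ⟨hzx, hzy⟩
      · simp
      · simp
      by_cases hzu : z = u
      · simp [hzu]
      by_cases hzv : z = v
      · simp [hzv]
      rcases hcover z hzSf hzu hzv with h | ⟨m, hm, hzm⟩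
      · simp [h]
      · rcases hKxy m hm with rfl | rfl
        · exact absurd hzm hzx
        · exact absurd hzm hzy
    · have h1 : (insert u (insert v (insert x (insert y T)))).card ≤ T.card + 4 := by
        have h2 := Finset.card_insert_le y T
        have h3 := Finset.card_insert_le x (insert y T)
        have h4 := Finset.card_insert_le v (insert x (insert y T))
        have h5 := Finset.card_insert_le u (insert v (insert x (insert y T)))
        omega
      have h2 : ((insert u (insert v (insert x (insert y T)))).card : ℝ) ≤ (T.card:ℝ) + 4 := by
        exact_mod_cast h1
      have h3 : (1:ℝ) ≤ (n:ℝ)/(L:ℝ) := by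
        have : (1:ℝ) ≤ 1000 * (L:ℝ)^2 := by nlinarith
        linarith
      have h4 : 20*(n:ℝ)/(L:ℝ) - 8*(n:ℝ)/(L:ℝ) = 12*((n:ℝ)/(L:ℝ)) := by ring
      linarith
  · -- CASE B: every pair is good
    push_neg at hbad
    have hs0 : (0:ℝ) < (S₀.card:ℝ) := by
      have : (0:ℝ) < 13*(n:ℝ)/(L:ℝ) := by positivity
      linarith
    have hB0 : 0 ≤ (S₀.card:ℝ) - 1 - 2*(L:ℝ) - 2*(n:ℝ)/(L:ℝ) := by
      have e1 : 13*(n:ℝ)/(L:ℝ) = 13*((n:ℝ)/(L:ℝ)) := by ring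
      have e2 : 2*(n:ℝ)/(L:ℝ) = 2*((n:ℝ)/(L:ℝ)) := by ring
      have hLsq : 100*(L:ℝ) ≤ (L:ℝ)^2 := by nlinarith
      linarith [hq1, hs13, hL100]
    have hex : ∃ m ∈ Hf, (S₀.card:ℝ) - 1 - 2*(L:ℝ) - 2*(n:ℝ)/(L:ℝ)
        < ((Nf E m ∩ S₀).card : ℝ) := by
      by_contra hall
      push_neg at hall
      set P : Finset (Fin n × Fin n) := S₀.offDiag with hP_def
      set A : Finset (Fin n × Fin n) := P.filter (fun p => Adj E p.1 p.2) with hA_def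
      set G : Finset (Fin n × Fin n) := P.filter (fun p => ¬ Adj E p.1 p.2) with hG_def
      have hAG : A.card + G.card = P.card :=
        Finset.card_filter_add_card_filter_not _
      have hAcard : (A.card:ℝ) ≤ 18*(n:ℝ) := by
        have hAsub : A ⊆ E.biUnion (fun e => e ×ˢ e) := by
          intro p hp
          obtain ⟨-, e, he, h1, h2⟩ := (Finset.mem_filter.1 hp).2
          exact Finset.mem_biUnion.2 ⟨e, he, Finset.mem_product.2 ⟨h1, h2⟩⟩
        have h1 : A.card ≤ ∑ e ∈ E, (e ×ˢ e).card :=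
          (Finset.card_le_card hAsub).trans Finset.card_biUnion_le
        have h2 : ∑ e ∈ E, (e ×ˢ e).card = ∑ e ∈ E, 9 := by
          refine Finset.sum_congr rfl fun e he => ?_
          rw [Finset.card_product, hsat.1 e he]
        have h3 : A.card ≤ 9 * E.card := by
          rw [h2, Finset.sum_const, smul_eq_mul, mul_comm] at h1
          exact h1
        have h4 : A.card ≤ 18 * n := by omega
        calc (A.card:ℝ) ≤ ((18*n : ℕ):ℝ) := by exact_mod_cast h4
          _ = 18*(n:ℝ) := by push_cast; ring
      have hGcard : G.card ≤ ∑ m, ((Nf E m ∩ S₀).offDiag).card := by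
        have hGsub : G ⊆ Finset.univ.biUnion (fun m => (Nf E m ∩ S₀).offDiag) := by
          intro p hp
          obtain ⟨hpP, hnadj⟩ := Finset.mem_filter.1 hp
          obtain ⟨h1, h2, hne⟩ := Finset.mem_offDiag.1 hpP
          have hgp := hbad p.1 h1 p.2 h2 hne hnadj
          obtain ⟨m, -, hm2, hm3⟩ := goodpair_mid hgp
          exact Finset.mem_biUnion.2 ⟨m, Finset.mem_univ m, Finset.mem_offDiag.2
            ⟨Finset.mem_inter.2 ⟨hm3, h1⟩, Finset.mem_inter.2 ⟨hm2, h2⟩, hne⟩⟩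
        exact (Finset.card_le_card hGsub).trans Finset.card_biUnion_le
      have hcle : ∀ c : ℕ, c ≤ c * c := by
        intro c
        rcases Nat.eq_zero_or_pos c with rfl | hc
        · simp
        · exact Nat.le_mul_of_pos_left c hc
      have hod : ∀ m : Fin n, (((Nf E m ∩ S₀).offDiag).card : ℝ)
          = ((Nf E m ∩ S₀).card : ℝ) * ((Nf E m ∩ S₀).card : ℝ)
            - ((Nf E m ∩ S₀).card : ℝ) := by
        intro m
        rw [Finset.offDiag_card, Nat.cast_sub (hcle _)]
        push_cast
        ring
      -- sum over H
      have hdisj : ∀ m₁ ∈ Hf, ∀ m₂ ∈ Hf, m₁ ≠ m₂ →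
          Disjoint (Nf E m₁ ∩ S₀) (Nf E m₂ ∩ S₀) := by
        intro m₁ hm₁ m₂ hm₂ hne
        rw [Finset.disjoint_left]
        intro z hz1 hz2
        obtain ⟨hza, hzS₀⟩ := Finset.mem_inter.1 hz1
        obtain ⟨hzb, -⟩ := Finset.mem_inter.1 hz2
        refine (hSnotQ z (hS₀Sf z hzS₀)).1 ?_
        rw [hQ]
        exact ⟨m₁, (memHf m₁).1 hm₁, m₂, (memHf m₂).1 hm₂, hne,
          adj_symm (adj_iff_mem_Nf.2 hza), adj_symm (adj_iff_mem_Nf.2 hzb)⟩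
      have hHsum_le : ∑ m ∈ Hf, ((Nf E m ∩ S₀).card : ℝ) ≤ (S₀.card : ℝ) := by
        have h1 : ∑ m ∈ Hf, (Nf E m ∩ S₀).card
            = (Hf.biUnion (fun m => Nf E m ∩ S₀)).card :=
          (Finset.card_biUnion hdisj).symm
        have h2 : Hf.biUnion (fun m => Nf E m ∩ S₀) ⊆ S₀ := by
          intro z hz
          obtain ⟨m, -, hm⟩ := Finset.mem_biUnion.1 hz
          exact (Finset.mem_inter.1 hm).2
        have h3 : ∑ m ∈ Hf, (Nf E m ∩ S₀).card ≤ S₀.card := by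
          rw [h1]; exact Finset.card_le_card h2
        exact_mod_cast h3
      have hHfsum : ∑ m ∈ Hf, (((Nf E m ∩ S₀).offDiag).card : ℝ)
          ≤ ((S₀.card:ℝ) - 1 - 2*(L:ℝ) - 2*(n:ℝ)/(L:ℝ)) * (S₀.card:ℝ) := by
        calc ∑ m ∈ Hf, (((Nf E m ∩ S₀).offDiag).card : ℝ)
            ≤ ∑ m ∈ Hf, ((S₀.card:ℝ) - 1 - 2*(L:ℝ) - 2*(n:ℝ)/(L:ℝ))
                * ((Nf E m ∩ S₀).card : ℝ) := by
              refine Finset.sum_le_sum fun m hm => ?_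
              rw [hod m]
              have h1 := hall m hm
              have h2 : (0:ℝ) ≤ ((Nf E m ∩ S₀).card : ℝ) := Nat.cast_nonneg _
              nlinarith
          _ = ((S₀.card:ℝ) - 1 - 2*(L:ℝ) - 2*(n:ℝ)/(L:ℝ))
                * ∑ m ∈ Hf, ((Nf E m ∩ S₀).card : ℝ) := by
              rw [Finset.mul_sum]
          _ ≤ ((S₀.card:ℝ) - 1 - 2*(L:ℝ) - 2*(n:ℝ)/(L:ℝ)) * (S₀.card:ℝ) :=
              mul_le_mul_of_nonneg_left hHsum_le hB0
      have hcsum : ∑ m, ((Nf E m ∩ S₀).card : ℝ) ≤ 12*(n:ℝ) := by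
        refine le_trans (Finset.sum_le_sum fun m _ => ?_) hsumNf
        exact_mod_cast Finset.card_le_card (Finset.inter_subset_left)
      have hnonHsum : ∑ m ∈ Finset.univ.filter
            (fun m => ¬ ((n : ℝ) / (L : ℝ) ^ 2 ≤ (deg E m : ℝ))),
            (((Nf E m ∩ S₀).offDiag).card : ℝ)
          ≤ (2*((n:ℝ)/(L:ℝ)^2)) * (12*(n:ℝ)) := by
        have hstep : ∀ m ∈ Finset.univ.filter
            (fun m => ¬ ((n : ℝ) / (L : ℝ) ^ 2 ≤ (deg E m : ℝ))),
            (((Nf E m ∩ S₀).offDiag).card : ℝ)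
              ≤ (2*((n:ℝ)/(L:ℝ)^2)) * ((Nf E m ∩ S₀).card : ℝ) := by
          intro m hm
          have hmH : m ∉ Hf := by
            rw [hHf_def]
            simp only [Finset.mem_filter, Finset.mem_univ, true_and]
            exact (Finset.mem_filter.1 hm).2
          have h1 : ((Nf E m ∩ S₀).card : ℝ) ≤ 2*((n:ℝ)/(L:ℝ)^2) := by
            refine le_trans ?_ (degNonH m hmH)
            exact_mod_cast Finset.card_le_card (Finset.inter_subset_left)
          have h2 : (0:ℝ) ≤ ((Nf E m ∩ S₀).card : ℝ) := Nat.cast_nonneg _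
          rw [hod m]
          nlinarith
        calc ∑ m ∈ Finset.univ.filter
              (fun m => ¬ ((n : ℝ) / (L : ℝ) ^ 2 ≤ (deg E m : ℝ))),
              (((Nf E m ∩ S₀).offDiag).card : ℝ)
            ≤ ∑ m ∈ Finset.univ.filter
              (fun m => ¬ ((n : ℝ) / (L : ℝ) ^ 2 ≤ (deg E m : ℝ))),
              (2*((n:ℝ)/(L:ℝ)^2)) * ((Nf E m ∩ S₀).card : ℝ) :=
              Finset.sum_le_sum hstep
          _ = (2*((n:ℝ)/(L:ℝ)^2)) * ∑ m ∈ Finset.univ.filter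
              (fun m => ¬ ((n : ℝ) / (L : ℝ) ^ 2 ≤ (deg E m : ℝ))),
              ((Nf E m ∩ S₀).card : ℝ) := by rw [Finset.mul_sum]
          _ ≤ (2*((n:ℝ)/(L:ℝ)^2)) * (12*(n:ℝ)) := by
              refine mul_le_mul_of_nonneg_left ?_ (by positivity)
              refine le_trans ?_ hcsum
              refine Finset.sum_le_sum_of_subset_of_nonneg (Finset.filter_subset _ _)
                fun m _ _ => Nat.cast_nonneg _
      have hsplit : ∑ m, (((Nf E m ∩ S₀).offDiag).card : ℝ)
          = ∑ m ∈ Hf, (((Nf E m ∩ S₀).offDiag).card : ℝ)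
            + ∑ m ∈ Finset.univ.filter
              (fun m => ¬ ((n : ℝ) / (L : ℝ) ^ 2 ≤ (deg E m : ℝ))),
              (((Nf E m ∩ S₀).offDiag).card : ℝ) := by
        rw [hHf_def]
        exact (Finset.sum_filter_add_sum_filter_not Finset.univ _ _).symm
      have hPc : (P.card : ℝ) = (S₀.card:ℝ) * (S₀.card:ℝ) - (S₀.card:ℝ) := by
        rw [hP_def, Finset.offDiag_card, Nat.cast_sub (hcle _)]
        push_cast
        ring
      have hGr : (G.card : ℝ) ≤ ((S₀.card:ℝ) - 1 - 2*(L:ℝ) - 2*(n:ℝ)/(L:ℝ)) * (S₀.card:ℝ)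
          + (2*((n:ℝ)/(L:ℝ)^2)) * (12*(n:ℝ)) := by
        have h0 : (G.card : ℝ) ≤ (((∑ m, ((Nf E m ∩ S₀).offDiag).card) : ℕ) : ℝ) := by
          exact_mod_cast hGcard
        have h1 : (G.card : ℝ) ≤ ∑ m, (((Nf E m ∩ S₀).offDiag).card : ℝ) := by
          push_cast at h0
          exact h0
        rw [hsplit] at h1
        linarith [hHfsum, hnonHsum]
      have hPr : (P.card : ℝ) ≤ (A.card : ℝ) + (G.card : ℝ) := by
        have := hAG
        have h1 : (A.card:ℝ) + (G.card:ℝ) = (P.card:ℝ) := by exact_mod_cast this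
        linarith
      -- final contradiction
      have hmain : 2*((n:ℝ)/(L:ℝ))*(S₀.card:ℝ)
          ≤ 18*(n:ℝ) + 24*(n:ℝ)^2/(L:ℝ)^2 := by
        have e1 : ((S₀.card:ℝ) - 1 - 2*(L:ℝ) - 2*(n:ℝ)/(L:ℝ)) * (S₀.card:ℝ)
            = (S₀.card:ℝ)*(S₀.card:ℝ) - (S₀.card:ℝ) - 2*(L:ℝ)*(S₀.card:ℝ)
              - 2*((n:ℝ)/(L:ℝ))*(S₀.card:ℝ) := by ring
        have e2 : (2*((n:ℝ)/(L:ℝ)^2)) * (12*(n:ℝ)) = 24*(n:ℝ)^2/(L:ℝ)^2 := by ring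
        have h2 : (0:ℝ) ≤ 2*(L:ℝ)*(S₀.card:ℝ) := by positivity
        rw [hPc] at hPr
        rw [e1, e2] at hGr
        linarith [hAcard]
      have h26 : 26*((n:ℝ)/(L:ℝ))*((n:ℝ)/(L:ℝ)) ≤ 2*((n:ℝ)/(L:ℝ))*(S₀.card:ℝ) := by
        have h1 : (0:ℝ) < 2*((n:ℝ)/(L:ℝ)) := by positivity
        have h2 : 13*((n:ℝ)/(L:ℝ)) ≤ (S₀.card:ℝ) := by
          have : 13*(n:ℝ)/(L:ℝ) = 13*((n:ℝ)/(L:ℝ)) := by ring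
          linarith [hs13]
        nlinarith
      have heq : 26*((n:ℝ)/(L:ℝ))*((n:ℝ)/(L:ℝ)) = 26*(n:ℝ)^2/(L:ℝ)^2 := by
        field_simp
      have e4 : 26*(n:ℝ)^2/(L:ℝ)^2 = 24*(n:ℝ)^2/(L:ℝ)^2 + 2*((n:ℝ)^2/(L:ℝ)^2) := by
        ring
      have h9 : 26*(n:ℝ)^2/(L:ℝ)^2 ≤ 18*(n:ℝ) + 24*(n:ℝ)^2/(L:ℝ)^2 := by
        calc 26*(n:ℝ)^2/(L:ℝ)^2 = 26*((n:ℝ)/(L:ℝ))*((n:ℝ)/(L:ℝ)) := heq.symm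
          _ ≤ 2*((n:ℝ)/(L:ℝ))*(S₀.card:ℝ) := h26
          _ ≤ 18*(n:ℝ) + 24*(n:ℝ)^2/(L:ℝ)^2 := hmain
      have h9' : (n:ℝ)^2/(L:ℝ)^2 ≤ 9*(n:ℝ) := by linarith
      have h10 : (n:ℝ)^2 ≤ 9*(n:ℝ)*(L:ℝ)^2 := by
        have hL2 : (0:ℝ) < (L:ℝ)^2 := by positivity
        have := (div_le_iff₀ hL2).1 h9'
        nlinarith
      have h11 : (n:ℝ) ≤ 9*(L:ℝ)^2 := by
        nlinarith
      nlinarith [hnL, hL100]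
    -- use the heavy vertex x
    obtain ⟨x, hxHf, hcx⟩ := hex
    refine wrap x x ((memHf x).1 hxHf) ({x} ∪ S₁ ∪ (S₀ \ Nf E x)) ?_ ?_
    · intro z hzS hzNN
      have hzSf : z ∈ Sf := (memSf z).2 hzS
      rcases notNN x x z hzNN with rfl | rfl | ⟨hzx, -⟩
      · simp
      · simp
      by_cases hz0 : z ∈ S₀
      · have hzn : z ∉ Nf E x := hzx
        simp only [Finset.mem_union, Finset.mem_sdiff, Finset.mem_singleton]
        exact Or.inr ⟨hz0, hzn⟩
      · have hz1 : z ∈ S₁ := by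
          rw [hS₁_def, Finset.mem_filter]
          refine ⟨hzSf, fun hc => hz0 ?_⟩
          rw [hS₀_def, Finset.mem_filter]
          exact ⟨hzSf, hc⟩
        simp only [Finset.mem_union, Finset.mem_singleton]
        exact Or.inl (Or.inr hz1)

    · have h1 : ({x} ∪ S₁ ∪ (S₀ \ Nf E x)).card
          ≤ 1 + S₁.card + (S₀ \ Nf E x).card := by
        have h2 := Finset.card_union_le ({x} ∪ S₁) (S₀ \ Nf E x)
        have h3 := Finset.card_union_le ({x} : Finset (Fin n)) S₁
        have h4 : ({x} : Finset (Fin n)).card = 1 := Finset.card_singleton x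
        omega
      have h5 : (S₀ ∩ Nf E x).card + (S₀ \ Nf E x).card = S₀.card :=
        Finset.card_inter_add_card_sdiff _ _
      have h6 : ((S₀ \ Nf E x).card : ℝ) = (S₀.card:ℝ) - ((S₀ ∩ Nf E x).card:ℝ) := by
        have := h5
        push_cast [← this]
        ring
      have h7 : ((Nf E x ∩ S₀).card:ℝ) = ((S₀ ∩ Nf E x).card:ℝ) := by
        rw [Finset.inter_comm]
      have h8 : ((S₀ \ Nf E x).card : ℝ) < 1 + 2*(L:ℝ) + 2*(n:ℝ)/(L:ℝ) := by
        rw [h6, ← h7]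
        linarith [hcx]
      have h9 : (({x} ∪ S₁ ∪ (S₀ \ Nf E x)).card : ℝ)
          ≤ 1 + (S₁.card:ℝ) + ((S₀ \ Nf E x).card:ℝ) := by exact_mod_cast h1
      have h10 : 2*(L:ℝ) + 2 ≤ 12*((n:ℝ)/(L:ℝ)) := by
        nlinarith [hq1, hL100]
      have h11 : 20*(n:ℝ)/(L:ℝ) = 6*(n:ℝ)/(L:ℝ) + 2*(n:ℝ)/(L:ℝ)
          + 12*((n:ℝ)/(L:ℝ)) := by ring
      linarith [hS₁c]

theorem exists_x_y_covering (ℓ : ℕ → ℕ) (hpos : ∀ n, 0 < ℓ n)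
    (htop : Filter.Tendsto ℓ Filter.atTop Filter.atTop)
    (hsmall : Filter.Tendsto (fun n => ((ℓ n : ℝ)) ^ 3 / n) Filter.atTop (nhds 0)) :
    ∃ n₀ : ℕ, ∀ n : ℕ, n₀ ≤ n → ∀ E : Finset (Finset (Fin n)),
      IsSat3 E → E.card ≤ 2 * n →
      ∀ H Q S : Set (Fin n),
        H = {v : Fin n | (n : ℝ) / (ℓ n : ℝ) ^ 2 ≤ (deg E v : ℝ)} →
        Q = {v : Fin n | ∃ u₁ ∈ H, ∃ u₂ ∈ H, u₁ ≠ u₂ ∧ Adj E v u₁ ∧ Adj E v u₂} →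
        S = Set.univ \ (Q ∪ H) →
        ∃ x y : Fin n, x ∈ H ∧
          (((S \ {u : Fin n | u ∉ ({x, y} : Set (Fin n)) ∧
              ∃ e ∈ E, u ∈ e ∧ (x ∈ e ∨ y ∈ e)}).ncard : ℝ) ≤ 20 * n / (ℓ n : ℝ)) := by
  have h1 : ∀ᶠ n in Filter.atTop, 100 ≤ ℓ n := htop.eventually_ge_atTop 100
  have h2 : ∀ᶠ n in Filter.atTop, ((ℓ n : ℝ)) ^ 3 / (n:ℝ) < 1/1000 :=
    hsmall.eventually (gt_mem_nhds (by norm_num))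
  have h3 : ∀ᶠ n in Filter.atTop, 1 ≤ n := Filter.eventually_ge_atTop 1
  obtain ⟨n₀, hn₀⟩ := Filter.eventually_atTop.1 ((h1.and h2).and h3)
  refine ⟨n₀, fun n hn E hsat hE H Q S hH hQ hS => ?_⟩
  obtain ⟨⟨hL, hsm⟩, hn1⟩ := hn₀ n hn
  have hnpos : (0:ℝ) < (n:ℝ) := by exact_mod_cast hn1
  have hcast : 1000 * (ℓ n) ^ 3 ≤ n := by
    have h4 : ((ℓ n : ℝ)) ^ 3 < (n:ℝ) / 1000 := by
      rw [div_lt_iff₀ hnpos] at hsm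
      rw [lt_div_iff₀ (by norm_num : (0:ℝ) < 1000)]
      linarith
    have h5 : (1000 : ℝ) * ((ℓ n : ℝ)) ^ 3 < (n:ℝ) := by
      rw [lt_div_iff₀ (by norm_num : (0:ℝ) < 1000)] at h4
      linarith
    exact_mod_cast h5.le
  exact main_core (ℓ n) hL hcast E hsat hE H Q S hH hQ hS
end
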